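/- arXiv:0911.4545 — 5 statements merged into one kernel-verified Lean document; each statement's English description precedes it below -/
import Mathlib

section
/- Define the star map * : C[a_1,...,a_r] → C[a_1,...,a_{r-1}] by letting f* be the coefficient of the highest power of a_r in f. Then the star map is injective on the space S_w(r) of binary invariants of weight w in r variables; explicitly, for f ∈ S_w(r) one has f(a_1,...,a_r) = (∏_{i=1}^{r-1} (a_r − a_i)^w) · f*(1/(a_r − a_1), ..., 1/(a_r − a_{r-1})). -/
open MvPolynomial

def IsBinaryInvariant (r w : ℕ) (f : MvPolynomial (Fin r) ℂ) : Prop :=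
  ∀ A B C D : ℝ, A * D - B * C = 1 →
    ∀ a : Fin r → ℂ, (∀ i, (C : ℂ) * a i + (D : ℂ) ≠ 0) →
      eval a f =
        eval (fun i => ((A : ℂ) * a i + (B : ℂ)) / ((C : ℂ) * a i + (D : ℂ))) f *
          ∏ i, ((C : ℂ) * a i + (D : ℂ)) ^ w

/-- The star map: the coefficient of the highest power of the last variable. -/
noncomputable def star {n : ℕ} (f : MvPolynomial (Fin (n + 1)) ℂ) : MvPolynomial (Fin n) ℂ :=
  ∑ m ∈ f.support.filter (fun m => m (Fin.last n) = f.degreeOf (Fin.last n)),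
    monomial (Finsupp.comapDomain Fin.castSucc m (Fin.castSucc_injective n).injOn)
      (coeff m f)

open Finset

lemma eq_of_eval_eq_on {n : ℕ} (h p q : MvPolynomial (Fin n) ℂ) (hh : h ≠ 0)
    (H : ∀ a : Fin n → ℂ, eval a h ≠ 0 → eval a p = eval a q) : p = q := by
  have key : h * (p - q) = 0 := by
    apply MvPolynomial.funext (q := 0)
    intro x
    rw [map_zero, map_mul, map_sub]
    by_cases hx : eval x h = 0
    · rw [hx, zero_mul]
    · rw [H x hx, sub_self, mul_zero]
  rcases mul_eq_zero.1 key with h0 | h0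
  · exact absurd h0 hh
  · exact sub_eq_zero.1 h0

lemma inv_rel {r w : ℕ} (f : MvPolynomial (Fin (r+1)) ℂ) (hf : IsBinaryInvariant (r+1) w f)
    (a : Fin (r+1) → ℂ) (ha : ∀ i, a i ≠ 0) :
    eval a f = eval (fun i => -(a i)⁻¹) f * ∏ i, (a i) ^ w := by
  have h := hf 0 (-1) 1 0 (by norm_num) a (by intro i; simpa using ha i)
  have e1 : (fun i => (((0:ℝ):ℂ) * a i + ((-1:ℝ):ℂ)) / (((1:ℝ):ℂ) * a i + ((0:ℝ):ℂ)))
      = fun i => -(a i)⁻¹ := by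
    funext i; push_cast; rw [zero_mul, zero_add, one_mul, add_zero, neg_div, one_div]
  rw [e1] at h
  simpa using h

lemma mobius_rel {r w : ℕ} (f : MvPolynomial (Fin (r+1)) ℂ) (hf : IsBinaryInvariant (r+1) w f)
    (a : Fin (r+1) → ℂ) (s : ℝ) (ha : ∀ i, (s:ℂ) ≠ a i) :
    eval a f = eval (fun i => ((s:ℂ) - a i)⁻¹) f * ∏ i, ((s:ℂ) - a i) ^ w := by
  have h := hf 0 1 (-1) s (by norm_num) a
    (by intro i; push_cast; rw [neg_one_mul, neg_add_eq_sub]; exact sub_ne_zero.2 (ha i))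
  have e1 : (fun i => (((0:ℝ):ℂ) * a i + ((1:ℝ):ℂ)) / ((((-1):ℝ):ℂ) * a i + ((s:ℝ):ℂ)))
      = fun i => ((s:ℂ) - a i)⁻¹ := by
    funext i; push_cast; rw [zero_mul, zero_add, neg_one_mul, neg_add_eq_sub, one_div]
  rw [e1] at h
  convert h using 2
  apply Finset.prod_congr rfl
  intro i _
  push_cast
  rw [neg_one_mul, neg_add_eq_sub]

lemma coeff_eq_zero_of_lt {r w : ℕ} (f : MvPolynomial (Fin (r+1)) ℂ)
    (hf : IsBinaryInvariant (r+1) w f) (m : Fin (r+1) →₀ ℕ) (i : Fin (r+1))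
    (hmi : w < m i) : coeff m f = 0 := by
  set N := f.totalDegree with hN
  have hbd : ∀ m' ∈ f.support, ∀ j, m' j ≤ N := by
    intro m' hm' j
    have h1 : m' j ≤ f.degreeOf j := by
      rw [degreeOf_eq_sup]; exact Finset.le_sup (f := fun m => m j) hm'
    exact h1.trans (degreeOf_le_totalDegree f j)
  set ν : Fin (r+1) →₀ ℕ := Finsupp.equivFunOnFinite.symm (fun _ => N) with hν
  set g : MvPolynomial (Fin (r+1)) ℂ :=
    ∑ m' ∈ f.support, monomial (Finsupp.equivFunOnFinite.symm (fun j => N + w - m' j))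
      ((∏ j, (-1:ℂ) ^ m' j) * coeff m' f) with hg
  have key : monomial ν (1:ℂ) * f = g := by
    apply eq_of_eval_eq_on (∏ j, X j)
    · intro h0
      have := congrArg (eval (fun _ : Fin (r+1) => (1:ℂ))) h0
      simp at this
    · intro a hae
      have ha : ∀ j, a j ≠ 0 := by
        intro j hj
        apply hae
        rw [map_prod]
        exact Finset.prod_eq_zero (mem_univ j) (by rw [eval_X, hj])
      rw [map_mul, eval_monomial, one_mul, Finsupp.prod_fintype _ _ (fun j => pow_zero _)]
      rw [inv_rel f hf a ha, hg, map_sum]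
      rw [eval_eq' (fun i => -(a i)⁻¹) f]
      rw [Finset.sum_mul, Finset.mul_sum]
      apply Finset.sum_congr rfl
      intro m' hm'
      rw [eval_monomial, Finsupp.prod_fintype _ _ (fun j => pow_zero _)]
      have e2 : ∀ j : Fin (r+1),
          a j ^ ((Finsupp.equivFunOnFinite.symm (fun j => N + w - m' j) : Fin (r+1) →₀ ℕ) j)
            = a j ^ N * a j ^ w * ((a j) ^ m' j)⁻¹ := by
        intro j
        rw [Finsupp.coe_equivFunOnFinite_symm,
          pow_sub₀ _ (ha j) ((hbd m' hm' j).trans (Nat.le_add_right N w)), pow_add]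
      rw [Finset.prod_congr rfl (fun j _ => e2 j), Finset.prod_mul_distrib,
        Finset.prod_mul_distrib]
      have e3 : ∀ j, (-(a j)⁻¹) ^ m' j = (-1:ℂ) ^ m' j * ((a j) ^ m' j)⁻¹ := by
        intro j; rw [neg_pow, inv_pow]
      rw [Finset.prod_congr rfl (fun j _ => e3 j), Finset.prod_mul_distrib]
      have e4 : ∀ j : Fin (r+1), a j ^ (ν j) = a j ^ N := by
        intro j; rw [hν, Finsupp.coe_equivFunOnFinite_symm]
      rw [Finset.prod_congr rfl (fun j _ => e4 j)]
      ring
  have hc := congrArg (coeff (ν + m)) key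
  rw [coeff_monomial_mul, one_mul] at hc
  rw [hc, hg, MvPolynomial.coeff_sum]
  apply Finset.sum_eq_zero
  intro m' hm'
  rw [coeff_monomial, if_neg]
  intro hEq
  have h1 := DFunLike.congr_fun hEq i
  simp only [Finsupp.coe_equivFunOnFinite_symm, Finsupp.add_apply, hν] at h1
  omega

lemma key_eval {r w : ℕ} (f : MvPolynomial (Fin (r+1)) ℂ) (hf : IsBinaryInvariant (r+1) w f)
    (a : Fin (r+1) → ℂ) :
    eval a f = ∑ m ∈ f.support, coeff m f * ∏ i, (a (Fin.last r) - a i) ^ (w - m i) := by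
  have hbd : ∀ m ∈ f.support, ∀ j, m j ≤ w := by
    intro m hm j
    by_contra hlt
    exact (MvPolynomial.mem_support_iff.1 hm)
      (coeff_eq_zero_of_lt f hf m j (lt_of_not_ge hlt))
  set P : Polynomial ℂ := Polynomial.C (eval a f)
      - ∑ m ∈ f.support, Polynomial.C (coeff m f) *
          ∏ i, (Polynomial.X - Polynomial.C (a i)) ^ (w - m i) with hP
  have hProot : ∀ s : ℝ, (∀ i, (s:ℂ) ≠ a i) → P.eval (s:ℂ) = 0 := by
    intro s hs
    rw [hP]
    simp only [Polynomial.eval_sub, Polynomial.eval_C, Polynomial.eval_finset_sum,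
      Polynomial.eval_mul, Polynomial.eval_prod, Polynomial.eval_pow, Polynomial.eval_sub,
      Polynomial.eval_X]
    rw [sub_eq_zero, mobius_rel f hf a s hs, eval_eq', Finset.sum_mul]
    apply Finset.sum_congr rfl
    intro m hm
    have e2 : ∀ j : Fin (r+1), ((s:ℂ) - a j) ^ (w - m j)
        = ((s:ℂ) - a j) ^ w * ((((s:ℂ) - a j)) ^ m j)⁻¹ :=
      fun j => pow_sub₀ _ (sub_ne_zero.2 (hs j)) (hbd m hm j)
    rw [Finset.prod_congr rfl (fun j _ => e2 j), Finset.prod_mul_distrib]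
    have e3 : ∀ j : Fin (r+1), ((s:ℂ) - a j)⁻¹ ^ m j = (((s:ℂ) - a j) ^ m j)⁻¹ :=
      fun j => inv_pow _ _
    rw [Finset.prod_congr rfl (fun j _ => e3 j)]
    ring
  have hP0 : P = 0 := by
    apply Polynomial.eq_zero_of_infinite_isRoot
    apply Set.Infinite.mono (s := (Set.range (fun x : ℝ => (x:ℂ))) \ (Set.range a))
    · rintro x ⟨⟨s, rfl⟩, hx⟩
      exact hProot s (fun i h => hx ⟨i, h.symm⟩)
    · exact (Set.infinite_range_of_injective Complex.ofReal_injective).diff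
        (Set.finite_range a)
  have h2 := congrArg (Polynomial.eval (a (Fin.last r))) hP0
  rw [hP] at h2
  simp only [Polynomial.eval_sub, Polynomial.eval_C, Polynomial.eval_finset_sum,
    Polynomial.eval_mul, Polynomial.eval_prod, Polynomial.eval_pow, Polynomial.eval_sub,
    Polynomial.eval_X, Polynomial.eval_zero] at h2
  exact sub_eq_zero.1 h2

lemma eval_star {r : ℕ} (f : MvPolynomial (Fin (r+1)) ℂ) (b : Fin r → ℂ) :
    eval b (_root_.star f) =
      ∑ m ∈ f.support.filter (fun m => m (Fin.last r) = f.degreeOf (Fin.last r)),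
        coeff m f * ∏ i : Fin r, b i ^ m i.castSucc := by
  unfold _root_.star
  rw [map_sum]
  apply Finset.sum_congr rfl
  intro m hm
  rw [eval_monomial, Finsupp.prod_fintype _ _ (fun j => pow_zero _)]
  simp [Finsupp.comapDomain_apply]

lemma part2 {r w : ℕ} (f : MvPolynomial (Fin (r+1)) ℂ) (hf : IsBinaryInvariant (r+1) w f)
    (a : Fin (r+1) → ℂ) (ha : ∀ i : Fin r, a (Fin.last r) ≠ a i.castSucc) :
    eval a f = (∏ i : Fin r, (a (Fin.last r) - a i.castSucc) ^ w) *
      eval (fun i : Fin r => 1 / (a (Fin.last r) - a i.castSucc)) (_root_.star f) := by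
  have hbd : ∀ m ∈ f.support, ∀ j, m j ≤ w := by
    intro m hm j
    by_contra hlt
    exact (MvPolynomial.mem_support_iff.1 hm)
      (coeff_eq_zero_of_lt f hf m j (lt_of_not_ge hlt))
  by_cases hex : ∃ m ∈ f.support, m (Fin.last r) = w
  · obtain ⟨m0, hm00, hm0w⟩ := hex
    have hdeg : f.degreeOf (Fin.last r) = w := by
      rw [degreeOf_eq_sup]
      apply le_antisymm
      · exact Finset.sup_le (fun m hm => hbd m hm _)
      · exact hm0w ▸ Finset.le_sup (f := fun m => m (Fin.last r)) hm00
    rw [key_eval f hf a, eval_star, hdeg]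
    rw [← Finset.sum_filter_of_ne (p := fun m => m (Fin.last r) = w)
      (f := fun m => coeff m f * ∏ i, (a (Fin.last r) - a i) ^ (w - m i)) ?hne]
    case hne =>
      intro m hm hne
      by_contra hmw
      apply hne
      have h1 : w - m (Fin.last r) ≠ 0 := by
        have := hbd m hm (Fin.last r); omega
      show coeff m f * ∏ i, (a (Fin.last r) - a i) ^ (w - m i) = 0
      rw [Finset.prod_eq_zero (mem_univ (Fin.last r))
        (by rw [sub_self]; exact zero_pow h1), mul_zero]
    rw [Finset.mul_sum]
    apply Finset.sum_congr rfl
    intro m hm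
    rw [Finset.mem_filter] at hm
    rw [Fin.prod_univ_castSucc (f := fun i => (a (Fin.last r) - a i) ^ (w - m i))]
    have e5 : ∀ i : Fin r, (a (Fin.last r) - a i.castSucc) ^ (w - m i.castSucc)
        = (a (Fin.last r) - a i.castSucc) ^ w
            * (1 / (a (Fin.last r) - a i.castSucc)) ^ m i.castSucc := by
      intro i
      rw [one_div, inv_pow, pow_sub₀ _ (sub_ne_zero.2 (ha i)) (hbd m hm.1 _)]
    rw [Finset.prod_congr rfl (fun i _ => e5 i), Finset.prod_mul_distrib, hm.2,
      Nat.sub_self, pow_zero, mul_one]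
    ring
  · have hf0 : f = 0 := by
      apply MvPolynomial.funext (q := 0)
      intro b
      rw [map_zero, key_eval f hf b]
      apply Finset.sum_eq_zero
      intro m hm
      have h1 : w - m (Fin.last r) ≠ 0 := by
        have h2 := hbd m hm (Fin.last r)
        have h3 : m (Fin.last r) ≠ w := fun h => hex ⟨m, hm, h⟩
        omega
      rw [Finset.prod_eq_zero (mem_univ (Fin.last r))
        (by rw [sub_self]; exact zero_pow h1), mul_zero]
    have hst : _root_.star f = 0 := by
      rw [hf0]; unfold _root_.star; simp
    rw [hst, hf0, map_zero, map_zero, mul_zero]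

/-- The star map is injective on `S_w(r)`; explicitly, for `f ∈ S_w(r)` one has
`f(a₁,…,a_r) = (∏_{i<r} (a_r - aᵢ)^w) · f*(1/(a_r - a₁), …, 1/(a_r - a_{r-1}))`. -/
theorem stmt4 (r w : ℕ) :
    (∀ f g : MvPolynomial (Fin (r + 1)) ℂ, IsBinaryInvariant (r + 1) w f →
      IsBinaryInvariant (r + 1) w g → star f = star g → f = g) ∧
    (∀ f : MvPolynomial (Fin (r + 1)) ℂ, IsBinaryInvariant (r + 1) w f →
      ∀ a : Fin (r + 1) → ℂ, (∀ i : Fin r, a (Fin.last r) ≠ a i.castSucc) →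
        eval a f =
          (∏ i : Fin r, (a (Fin.last r) - a i.castSucc) ^ w) *
            eval (fun i : Fin r => 1 / (a (Fin.last r) - a i.castSucc)) (star f)) := by
  constructor
  · intro f g hfi hgi hst
    apply eq_of_eval_eq_on (∏ i : Fin r, (X (Fin.last r) - X i.castSucc))
    · intro h0
      have h1 := congrArg (eval (fun j : Fin (r+1) => if j = Fin.last r then (1:ℂ) else 0)) h0
      rw [map_zero, map_prod] at h1
      have h2 : ∀ i : Fin r,
          eval (fun j : Fin (r+1) => if j = Fin.last r then (1:ℂ) else 0)
            (X (Fin.last r) - X i.castSucc) = 1 := by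
        intro i
        rw [map_sub, eval_X, eval_X, if_pos rfl, if_neg (Fin.castSucc_lt_last i).ne, sub_zero]
      rw [Finset.prod_congr rfl (fun i _ => h2 i), Finset.prod_const_one] at h1
      exact one_ne_zero h1
    · intro a hae
      have hcond : ∀ i : Fin r, a (Fin.last r) ≠ a i.castSucc := by
        intro i
        rw [map_prod] at hae
        have h3 := Finset.prod_ne_zero_iff.1 hae i (mem_univ i)
        rw [map_sub, eval_X, eval_X] at h3
        exact sub_ne_zero.1 h3
      rw [part2 f hfi a hcond, part2 g hgi a hcond, hst]
  · intro f hf a ha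
    exact part2 f hf a ha
end

section
/- Let H_g = (1/2^g)·(1/(g+1))·Δ_{B_g}² · Σ_{e ∈ E_{2g+2}} (−1/ψ_e), a polynomial in a_1,...,a_{2g+2} (since each ψ_e divides Δ_{B_g}²). Then the full symmetrization of H_g vanishes: Σ_{σ ∈ S_{2g+2}} σ(H_g) = 0, where σ(f)(a_1,...,a_{2g+2}) = f(a_{σ(1)},...,a_{σ(2g+2)}). -/
open MvPolynomial

/-- `Δ_{B_g} = ∏_{i>j} (aᵢ - aⱼ)`, the full Vandermonde product. -/
noncomputable def DeltaFull (r : ℕ) : MvPolynomial (Fin r) ℂ :=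
  ∏ p ∈ (Finset.univ ×ˢ Finset.univ).filter (fun p : Fin r × Fin r => p.2 < p.1),
    (X p.1 - X p.2)

/-- `ψ_e = (a_{e_{2g+2}} - a_{e₁}) · ∏_{i=1}^{2g+1} (a_{eᵢ} - a_{eᵢ₊₁})`. -/
noncomputable def psi (g : ℕ) (e : Equiv.Perm (Fin (2 * g + 2))) :
    MvPolynomial (Fin (2 * g + 2)) ℂ :=
  (X (e ⟨2 * g + 1, by omega⟩) - X (e ⟨0, by omega⟩)) *
    ∏ i : Fin (2 * g + 1), (X (e ⟨i.val, by omega⟩) - X (e ⟨i.val + 1, by omega⟩))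

/-- `E_{2g+2}`: permutations of the indices alternating odd/even starting with odd. -/
noncomputable def Eset (g : ℕ) : Finset (Equiv.Perm (Fin (2 * g + 2))) :=
  Finset.univ.filter (fun e => ∀ i, (e i).val % 2 = i.val % 2)

namespace Aux14


noncomputable def Psi (g : ℕ) (e : Equiv.Perm (Fin (2*g+2))) : MvPolynomial (Fin (2*g+2)) ℂ :=
  ∏ i : Fin (2*g+2), (X (e i) - X (e (i+1)))

lemma psi_eq (g : ℕ) (e : Equiv.Perm (Fin (2*g+2))) : psi g e = Psi g e := by
  rw [psi, Psi]
  rw [Fin.prod_univ_castSucc (n := 2*g+1) (f := fun i => (X (e i) - X (e (i+1)) : MvPolynomial (Fin (2*g+2)) ℂ))]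
  conv_rhs => rw [mul_comm]
  congr 1
  · have h1 : (⟨2*g+1, by omega⟩ : Fin (2*g+2)) = Fin.last (2*g+1) := rfl
    have h2 : (⟨0, by omega⟩ : Fin (2*g+2)) = Fin.last (2*g+1) + 1 := by
      ext
      simp [Fin.last, Fin.val_add]
    rw [h1, h2]
  · apply Finset.prod_congr rfl
    intro i _
    have h1 : (⟨i.val, by omega⟩ : Fin (2*g+2)) = Fin.castSucc i := rfl
    have h2 : (⟨i.val + 1, by omega⟩ : Fin (2*g+2)) = Fin.castSucc i + 1 := by
      ext
      simp [Fin.val_add, Nat.mod_eq_of_lt (by omega : i.val + 1 < 2*g+2)]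
    rw [h1, h2]

lemma rename_psi (g : ℕ) (σ e : Equiv.Perm (Fin (2*g+2))) :
    rename (σ : Fin (2*g+2) → Fin (2*g+2)) (psi g e) = psi g (σ * e) := by
  rw [psi_eq, psi_eq, Psi, Psi, map_prod]
  exact Finset.prod_congr rfl fun i _ => by simp

lemma X_sub_X_ne_zero (g : ℕ) {a b : Fin (2*g+2)} (h : a ≠ b) :
    (X a - X b : MvPolynomial (Fin (2*g+2)) ℂ) ≠ 0 := by
  rw [sub_ne_zero]
  exact fun hh => h (MvPolynomial.X_injective hh)

lemma succ_ne_self {m : ℕ} (i : Fin (m+2)) : i + 1 ≠ i := by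
  intro h
  have h1 : i + 1 = i + 0 := by rw [h, add_zero]
  have h2 : (1 : Fin (m+2)) = 0 := add_left_cancel h1
  simpa using congrArg Fin.val h2

lemma psi_ne_zero (g : ℕ) (e : Equiv.Perm (Fin (2*g+2))) : psi g e ≠ 0 := by
  rw [psi_eq, Psi]
  rw [Finset.prod_ne_zero_iff]
  intro i _
  apply X_sub_X_ne_zero
  exact fun h => (succ_ne_self i) (e.injective h.symm)



lemma X_sub_X_ne_zero' {ι : Type*} {a b : ι} (h : a ≠ b) :
    (X a - X b : MvPolynomial ι ℂ) ≠ 0 := by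
  rw [sub_ne_zero]
  exact fun hh => h (MvPolynomial.X_injective hh)

noncomputable def W (r : ℕ) : MvPolynomial (Fin r) ℂ :=
  ∏ p ∈ (Finset.univ ×ˢ Finset.univ).filter (fun p : Fin r × Fin r => p.1 ≠ p.2),
    (X p.1 - X p.2)

lemma delta_sq (r : ℕ) :
    DeltaFull r ^ 2
      = (-1)^(((Finset.univ ×ˢ Finset.univ).filter (fun p : Fin r × Fin r => p.2 < p.1)).card) * W r := by
  set P := (Finset.univ ×ˢ Finset.univ).filter (fun p : Fin r × Fin r => p.2 < p.1) with hP
  have h1 : (((Finset.univ ×ˢ Finset.univ).filter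
      (fun p : Fin r × Fin r => p.1 ≠ p.2)).filter (fun p => p.2 < p.1)) = P := by
    rw [Finset.filter_filter]
    apply Finset.filter_congr
    intro p _
    constructor
    · exact fun h => h.2
    · exact fun h => ⟨ne_of_gt h, h⟩
  have h2 : (((Finset.univ ×ˢ Finset.univ).filter
      (fun p : Fin r × Fin r => p.1 ≠ p.2)).filter (fun p => ¬ p.2 < p.1))
      = (Finset.univ ×ˢ Finset.univ).filter (fun p : Fin r × Fin r => p.1 < p.2) := by
    rw [Finset.filter_filter]
    apply Finset.filter_congr
    intro p _
    constructor
    · exact fun h => lt_of_le_of_ne (le_of_not_gt h.2) h.1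
    · exact fun h => ⟨ne_of_lt h, not_lt_of_gt h⟩
  have h3 : ∏ p ∈ (Finset.univ ×ˢ Finset.univ).filter (fun p : Fin r × Fin r => p.1 < p.2),
      (X p.1 - X p.2 : MvPolynomial (Fin r) ℂ) = ∏ p ∈ P, (X p.2 - X p.1) := by
    apply Finset.prod_nbij' (fun p => (p.2, p.1)) (fun p => (p.2, p.1))
    · intro p hp; simp only [hP, Finset.mem_filter, Finset.mem_product] at *; tauto
    · intro p hp; simp only [hP, Finset.mem_filter, Finset.mem_product] at *; tauto
    · intro p _; rfl
    · intro p _; rfl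
    · intro p _; rfl
  have h4 : ∏ p ∈ P, (X p.2 - X p.1 : MvPolynomial (Fin r) ℂ)
      = (-1)^P.card * DeltaFull r := by
    rw [DeltaFull, ← hP, ← Finset.prod_const (b := (-1 : MvPolynomial (Fin r) ℂ)),
      ← Finset.prod_mul_distrib]
    apply Finset.prod_congr rfl
    intro p _
    ring
  have := Finset.prod_filter_mul_prod_filter_not
    ((Finset.univ ×ˢ Finset.univ).filter (fun p : Fin r × Fin r => p.1 ≠ p.2))
    (fun p => p.2 < p.1) (fun p => (X p.1 - X p.2 : MvPolynomial (Fin r) ℂ))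
  rw [h1, h2, h3, h4] at this
  rw [W, ← this, DeltaFull, ← hP]
  ring_nf
  rw [pow_mul']
  norm_num
lemma rename_W (r : ℕ) (σ : Equiv.Perm (Fin r)) :
    rename (σ : Fin r → Fin r) (W r) = W r := by
  rw [W, map_prod]
  apply Finset.prod_nbij' (fun p => (σ p.1, σ p.2)) (fun p => (σ⁻¹ p.1, σ⁻¹ p.2))
  · intro p hp
    simp only [Finset.mem_filter, Finset.mem_product] at *
    exact ⟨⟨Finset.mem_univ _, Finset.mem_univ _⟩, fun h => hp.2 (σ.injective h)⟩
  · intro p hp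
    simp only [Finset.mem_filter, Finset.mem_product] at *
    exact ⟨⟨Finset.mem_univ _, Finset.mem_univ _⟩, fun h => hp.2 (σ⁻¹.injective h)⟩
  · intro p _; simp
  · intro p _; simp
  · intro p _; simp

lemma rename_delta_sq (r : ℕ) (σ : Equiv.Perm (Fin r)) :
    rename (σ : Fin r → Fin r) (DeltaFull r ^ 2) = DeltaFull r ^ 2 := by
  rw [delta_sq, map_mul, rename_W, map_pow, map_neg, map_one]

lemma delta_ne_zero (r : ℕ) : DeltaFull r ≠ 0 := by
  rw [DeltaFull, Finset.prod_ne_zero_iff]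
  intro p hp
  simp only [Finset.mem_filter] at hp
  exact X_sub_X_ne_zero' (ne_of_gt hp.2)

lemma eval_delta_eq_zero (r : ℕ) (x : Fin r → ℂ) (hx : ¬ Function.Injective x) :
    eval x (DeltaFull r) = 0 := by
  rw [Function.Injective] at hx
  push_neg at hx
  obtain ⟨a, b, hab, hne⟩ := hx
  rw [DeltaFull, eval_prod]
  rcases lt_or_gt_of_ne hne with h | h
  · apply Finset.prod_eq_zero (i := ((b, a) : Fin r × Fin r))
    · simp [h]
    · simp [hab]
  · apply Finset.prod_eq_zero (i := ((a, b) : Fin r × Fin r))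
    · simp [h]
    · simp [hab]



/-- value of the cyclic product at a point -/
def psiv (g : ℕ) (x : Fin (2*g+2) → ℂ) (e : Equiv.Perm (Fin (2*g+2))) : ℂ :=
  ∏ i : Fin (2*g+2), (x (e i) - x (e (i+1)))

/-- the last index -/
def Lst (g : ℕ) : Fin (2*g+2) := ⟨2*g+1, by omega⟩

/-- the rotation of positions `1,…,2g+1` fixing position `0`. -/
def del (g : ℕ) : Equiv.Perm (Fin (2*g+2)) :=
  Equiv.swap 0 1 * Equiv.addRight 1

/-- contracted cycle value -/
def Fv (g : ℕ) (x : Fin (2*g+2) → ℂ) (e : Equiv.Perm (Fin (2*g+2))) : ℂ :=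
  ∏ i ∈ Finset.univ.erase (0 : Fin (2*g+2)), (x (e i) - x (e (del g i)))

variable {g : ℕ}

lemma succ_ne_self' {m : ℕ} (i : Fin (m+2)) : i + 1 ≠ i := by
  intro h
  have h1 : i + 1 = i + 0 := by rw [h, add_zero]
  have h2 : (1 : Fin (m+2)) = 0 := add_left_cancel h1
  simpa using congrArg Fin.val h2

lemma Lst_add_one : Lst g + 1 = 0 := by
  apply Fin.ext
  simp [Lst, Fin.val_add]

lemma Lst_ne_zero : Lst g ≠ 0 := by
  intro h
  simpa [Lst] using congrArg Fin.val h

lemma fin_one_ne_zero : (1 : Fin (2*g+2)) ≠ 0 := by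
  intro h
  have := congrArg Fin.val h
  rw [Fin.val_one'] at this
  simp at this

lemma Lst_ne_one (hg : 1 ≤ g) : Lst g ≠ 1 := by
  intro h
  have := congrArg Fin.val h
  rw [Fin.val_one'] at this
  simp [Lst] at this
  omega

lemma del_zero : del g 0 = 0 := by
  simp [del, Equiv.Perm.mul_apply, Equiv.swap_apply_right]

lemma del_Lst : del g (Lst g) = 1 := by
  simp only [del, Equiv.Perm.mul_apply, Equiv.coe_addRight, Lst_add_one]
  exact Equiv.swap_apply_left 0 1

lemma del_apply {i : Fin (2*g+2)} (h0 : i ≠ 0) (hL : i ≠ Lst g) : del g i = i + 1 := by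
  have h1 : i + 1 ≠ 0 := by
    intro h
    rw [← Lst_add_one (g := g), add_left_inj] at h
    exact hL h
  have h2 : i + 1 ≠ 1 := by
    intro h
    exact h0 (by simpa using eq_sub_of_add_eq h)
  simp only [del, Equiv.Perm.mul_apply, Equiv.coe_addRight]
  exact Equiv.swap_apply_of_ne_of_ne h1 h2

variable (x : Fin (2*g+2) → ℂ)

lemma Fv_mul_del (e : Equiv.Perm (Fin (2*g+2))) : Fv g x (e * del g) = Fv g x e := by
  rw [Fv, Fv]
  apply Finset.prod_nbij' (fun i => del g i) (fun i => (del g)⁻¹ i)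
  · intro a ha
    simp only [Finset.mem_erase, Finset.mem_univ, and_true] at *
    intro h
    apply ha
    have := (del g).injective (h.trans (del_zero (g := g)).symm)
    exact this
  · intro a ha
    simp only [Finset.mem_erase, Finset.mem_univ, and_true] at *
    intro h
    apply ha
    rw [← del_zero (g := g), ← h]
    simp
  · intro a _; simp
  · intro a _; simp
  · intro a _
    simp [Equiv.Perm.mul_apply]

lemma rot_invariance (k : Fin (2*g+2)) (e : Equiv.Perm (Fin (2*g+2))) :
    psiv g x (e * Equiv.addRight k) = psiv g x e := by
  rw [psiv, psiv]
  apply Fintype.prod_equiv (Equiv.addRight k)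
  intro i
  simp only [Equiv.Perm.mul_apply, Equiv.coe_addRight]
  congr 2
  rw [add_right_comm]

lemma psiv_ne_zero (hx : Function.Injective x) (e : Equiv.Perm (Fin (2*g+2))) :
    psiv g x e ≠ 0 := by
  rw [psiv, Finset.prod_ne_zero_iff]
  intro i _
  rw [sub_ne_zero]
  intro h
  exact succ_ne_self' i (e.injective (hx h)).symm

lemma split (hg : 1 ≤ g) (hx : Function.Injective x) (e : Equiv.Perm (Fin (2*g+2)))
    (he : e 0 = 0) :
    (psiv g x e)⁻¹ = (Fv g x e)⁻¹ * ((x (e (Lst g)) - x 0)⁻¹ + (x 0 - x (e 1))⁻¹) := by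
  have hmem : Lst g ∈ Finset.univ.erase (0 : Fin (2*g+2)) :=
    Finset.mem_erase.mpr ⟨Lst_ne_zero, Finset.mem_univ _⟩
  set R := ∏ i ∈ (Finset.univ.erase (0 : Fin (2*g+2))).erase (Lst g),
    (x (e i) - x (e (i+1))) with hR
  have hpsiv : psiv g x e = (x 0 - x (e 1)) * ((x (e (Lst g)) - x 0) * R) := by
    rw [psiv, ← Finset.mul_prod_erase Finset.univ _ (Finset.mem_univ (0 : Fin (2*g+2))),
      ← Finset.mul_prod_erase _ _ hmem, Lst_add_one, he, zero_add]
  have hF : Fv g x e = (x (e (Lst g)) - x (e 1)) * R := by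
    rw [Fv, ← Finset.mul_prod_erase _ _ hmem, del_Lst]
    congr 1
    apply Finset.prod_congr rfl
    intro i hi
    simp only [Finset.mem_erase] at hi
    rw [del_apply hi.2.1 hi.1]
  have hRne : R ≠ 0 := by
    rw [hR, Finset.prod_ne_zero_iff]
    intro i _
    rw [sub_ne_zero]
    intro h
    exact succ_ne_self' i (e.injective (hx h)).symm
  have ha : x (e (Lst g)) - x 0 ≠ 0 := by
    rw [sub_ne_zero, ← he]
    exact fun h => Lst_ne_zero (e.injective (hx h))
  have hb : x 0 - x (e 1) ≠ 0 := by
    rw [sub_ne_zero, ← he]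
    exact fun h => fin_one_ne_zero (e.injective (hx h)).symm
  have hab : x (e (Lst g)) - x (e 1) ≠ 0 := by
    rw [sub_ne_zero]
    exact fun h => Lst_ne_one hg (e.injective (hx h))
  rw [hpsiv, hF]
  field_simp
  ring

lemma T_zero (hg : 1 ≤ g) (hx : Function.Injective x) :
    ∑ e ∈ Finset.univ.filter (fun e : Equiv.Perm (Fin (2*g+2)) => e 0 = 0),
      (psiv g x e)⁻¹ = 0 := by
  rw [Finset.sum_congr rfl (fun e he => split x hg hx e (Finset.mem_filter.mp he).2)]
  simp only [mul_add]
  rw [Finset.sum_add_distrib]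
  have key : ∑ e ∈ Finset.univ.filter (fun e : Equiv.Perm (Fin (2*g+2)) => e 0 = 0),
        (Fv g x e)⁻¹ * (x 0 - x (e 1))⁻¹
      = ∑ e ∈ Finset.univ.filter (fun e : Equiv.Perm (Fin (2*g+2)) => e 0 = 0),
        -((Fv g x e)⁻¹ * (x (e (Lst g)) - x 0)⁻¹) := by
    apply Finset.sum_nbij' (fun e => e * del g) (fun e => e * (del g)⁻¹)
    · intro a ha
      simp only [Finset.mem_filter, Finset.mem_univ, true_and,
        Equiv.Perm.mul_apply] at *
      rw [del_zero, ha]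
    · intro a ha
      simp only [Finset.mem_filter, Finset.mem_univ, true_and,
        Equiv.Perm.mul_apply] at *
      rw [show ((del g)⁻¹ : Equiv.Perm (Fin (2*g+2))) 0 = 0 from
        (Equiv.Perm.inv_eq_iff_eq).mpr del_zero.symm, ha]
    · intro a _
      ext i
      simp [mul_assoc]
    · intro a _
      ext i
      simp [mul_assoc]
    · intro a _
      rw [Fv_mul_del]
      have h1 : (a * del g) (Lst g) = a 1 := by
        rw [Equiv.Perm.mul_apply, del_Lst]
      rw [h1]
      have h2 : x 0 - x (a 1) = -(x (a 1) - x 0) := by ring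
      rw [h2, inv_neg]
      ring
  rw [key, Finset.sum_neg_distrib]
  ring

lemma key_sum (hg : 1 ≤ g) (hx : Function.Injective x) :
    ∑ e : Equiv.Perm (Fin (2*g+2)), (psiv g x e)⁻¹ = 0 := by
  rw [← Finset.sum_fiberwise Finset.univ (fun e : Equiv.Perm (Fin (2*g+2)) => e⁻¹ 0)
    (fun e => (psiv g x e)⁻¹)]
  apply Finset.sum_eq_zero
  intro k _
  have : ∑ e ∈ Finset.univ.filter (fun e : Equiv.Perm (Fin (2*g+2)) => e⁻¹ 0 = k),
        (psiv g x e)⁻¹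
      = ∑ e ∈ Finset.univ.filter (fun e : Equiv.Perm (Fin (2*g+2)) => e 0 = 0),
        (psiv g x e)⁻¹ := by
    apply Finset.sum_nbij' (fun e => e * Equiv.addRight k)
      (fun e => e * (Equiv.addRight k)⁻¹)
    · intro a ha
      simp only [Finset.mem_filter, Finset.mem_univ, true_and,
        Equiv.Perm.mul_apply, Equiv.coe_addRight] at *
      rw [zero_add, ← ha]; exact Equiv.apply_symm_apply a 0
    · intro a ha
      simp only [Finset.mem_filter, Finset.mem_univ, true_and] at *
      rw [mul_inv_rev, inv_inv, Equiv.Perm.mul_apply,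
        (Equiv.Perm.inv_eq_iff_eq).mpr ha.symm]
      simp
    · intro a _
      ext i
      simp [mul_assoc]
    · intro a _
      ext i
      simp [mul_assoc]
    · intro a _
      rw [rot_invariance]
  rw [this, T_zero x hg hx]



lemma heval (g : ℕ) (x : Fin (2*g+2) → ℂ) (e : Equiv.Perm (Fin (2*g+2))) :
    eval x (psi g e) = psiv g x e := by
  rw [psi_eq, Psi, eval_prod, psiv]
  apply Finset.prod_congr rfl
  intro i _
  rw [map_sub, eval_X, eval_X]

lemma poly_key (g : ℕ) (hg : 1 ≤ g) :
    ∑ τ : Equiv.Perm (Fin (2*g+2)), ∏ τ' ∈ Finset.univ.erase τ, psi g τ' = 0 := by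
  have hcancel : (∑ τ : Equiv.Perm (Fin (2*g+2)), ∏ τ' ∈ Finset.univ.erase τ, psi g τ')
      * DeltaFull (2*g+2) = 0 := by
    apply MvPolynomial.funext
    intro x
    rw [map_zero, map_mul, map_sum]
    by_cases hx : Function.Injective x
    · have hsum : ∑ τ : Equiv.Perm (Fin (2*g+2)),
          eval x (∏ τ' ∈ Finset.univ.erase τ, psi g τ') = 0 := by
        have h1 : ∀ τ : Equiv.Perm (Fin (2*g+2)),
            eval x (∏ τ' ∈ Finset.univ.erase τ, psi g τ')
            = (∏ τ' : Equiv.Perm (Fin (2*g+2)), psiv g x τ') * (psiv g x τ)⁻¹ := by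
          intro τ
          rw [eval_prod]
          rw [Finset.prod_congr rfl (fun τ' _ => heval g x τ')]
          rw [eq_mul_inv_iff_mul_eq₀ (psiv_ne_zero x hx τ)]
          exact Finset.prod_erase_mul Finset.univ _ (Finset.mem_univ τ)
        rw [Finset.sum_congr rfl (fun τ _ => h1 τ), ← Finset.mul_sum,
          key_sum x hg hx, mul_zero]
      rw [hsum, zero_mul]
    · rw [eval_delta_eq_zero _ x hx, mul_zero]
  rcases mul_eq_zero.mp hcancel with h | h
  · exact h
  · exact absurd h (delta_ne_zero _)

lemma rename_delta_sq' (r : ℕ) (σ : Equiv.Perm (Fin r)) :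
    (rename (σ : Fin r → Fin r) (DeltaFull r)) ^ 2 = DeltaFull r ^ 2 := by
  rw [← map_pow, rename_delta_sq]

end Aux14

open Aux14 in
/-- The full symmetrization of `H_g = (1/2^g)(1/(g+1)) Δ_{B_g}² Σ_{e∈E}(−1/ψ_e)` vanishes.
(The defining equation of `H_g` is stated multiplied through by `2^g (g+1) ∏_e ψ_e`,
which determines `H_g` uniquely.) -/
theorem stmt14 (g : ℕ) (hg : 1 ≤ g) (H : MvPolynomial (Fin (2 * g + 2)) ℂ)
    (hH : C ((2 ^ g * (g + 1) : ℕ) : ℂ) * (H * ∏ e ∈ Eset g, psi g e)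
      = -(DeltaFull (2 * g + 2)) ^ 2 * ∑ e ∈ Eset g, ∏ e' ∈ (Eset g).erase e, psi g e') :
    ∑ σ : Equiv.Perm (Fin (2 * g + 2)),
      rename (σ : Fin (2 * g + 2) → Fin (2 * g + 2)) H = 0 := by
  have hren : ∀ σ : Equiv.Perm (Fin (2*g+2)),
      C ((2 ^ g * (g + 1) : ℕ) : ℂ) *
        (rename (σ : Fin (2*g+2) → Fin (2*g+2)) H * ∏ e ∈ Eset g, psi g (σ * e))
      = -(DeltaFull (2 * g + 2)) ^ 2 *
          ∑ e ∈ Eset g, ∏ e' ∈ (Eset g).erase e, psi g (σ * e') := by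
    intro σ
    have h := congrArg (rename (σ : Fin (2*g+2) → Fin (2*g+2))) hH
    simpa [map_mul, map_sum, map_prod, rename_psi, rename_C, rename_delta_sq,
      rename_delta_sq'] using h
  have step : ∀ σ : Equiv.Perm (Fin (2*g+2)),
      C ((2 ^ g * (g + 1) : ℕ) : ℂ) *
        (rename (σ : Fin (2*g+2) → Fin (2*g+2)) H *
          ∏ τ : Equiv.Perm (Fin (2*g+2)), psi g τ)
      = -(DeltaFull (2 * g + 2)) ^ 2 *
          ∑ e ∈ Eset g, ∏ τ ∈ Finset.univ.erase (σ * e), psi g τ := by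
    intro σ
    have himg_inj : ∀ a ∈ Eset g, ∀ b ∈ Eset g, σ * a = σ * b → a = b :=
      fun a _ b _ h => mul_left_cancel h
    have ha : (∏ e ∈ Eset g, psi g (σ * e)) *
        (∏ τ ∈ Finset.univ \ (Eset g).image (fun e => σ * e), psi g τ)
        = ∏ τ : Equiv.Perm (Fin (2*g+2)), psi g τ := by
      have hpi : ∏ x ∈ (Eset g).image (fun e => σ * e), psi g x
          = ∏ e ∈ Eset g, psi g (σ * e) := Finset.prod_image himg_inj
      rw [← hpi]
      exact (mul_comm _ _).trans (Finset.prod_sdiff (Finset.subset_univ _))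
    have hb : ∀ e ∈ Eset g, (∏ e' ∈ (Eset g).erase e, psi g (σ * e')) *
        (∏ τ ∈ Finset.univ \ (Eset g).image (fun e => σ * e), psi g τ)
        = ∏ τ ∈ Finset.univ.erase (σ * e), psi g τ := by
      intro e he
      apply mul_left_cancel₀ (psi_ne_zero g (σ * e))
      rw [← mul_assoc,
        Finset.mul_prod_erase (Eset g) (fun e' => psi g (σ * e')) he, ha,
        Finset.mul_prod_erase Finset.univ _ (Finset.mem_univ (σ * e))]
    calc C ((2 ^ g * (g + 1) : ℕ) : ℂ) *
        (rename (σ : Fin (2*g+2) → Fin (2*g+2)) H *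
          ∏ τ : Equiv.Perm (Fin (2*g+2)), psi g τ)
        = (C ((2 ^ g * (g + 1) : ℕ) : ℂ) *
            (rename (σ : Fin (2*g+2) → Fin (2*g+2)) H *
              ∏ e ∈ Eset g, psi g (σ * e))) *
          (∏ τ ∈ Finset.univ \ (Eset g).image (fun e => σ * e), psi g τ) := by
          rw [← ha]; ring
      _ = (-(DeltaFull (2 * g + 2)) ^ 2 *
            ∑ e ∈ Eset g, ∏ e' ∈ (Eset g).erase e, psi g (σ * e')) *
          (∏ τ ∈ Finset.univ \ (Eset g).image (fun e => σ * e), psi g τ) := by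
          rw [hren σ]
      _ = -(DeltaFull (2 * g + 2)) ^ 2 *
          ∑ e ∈ Eset g, (∏ e' ∈ (Eset g).erase e, psi g (σ * e')) *
            (∏ τ ∈ Finset.univ \ (Eset g).image (fun e => σ * e), psi g τ) := by
          rw [mul_assoc, Finset.sum_mul]
      _ = -(DeltaFull (2 * g + 2)) ^ 2 *
          ∑ e ∈ Eset g, ∏ τ ∈ Finset.univ.erase (σ * e), psi g τ := by
          rw [Finset.sum_congr rfl hb]
  have total := Finset.sum_congr rfl
    (fun (σ : Equiv.Perm (Fin (2*g+2))) (_ : σ ∈ Finset.univ) => step σ)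
  have hL : ∑ σ : Equiv.Perm (Fin (2*g+2)),
      C ((2 ^ g * (g + 1) : ℕ) : ℂ) *
        (rename (σ : Fin (2*g+2) → Fin (2*g+2)) H *
          ∏ τ : Equiv.Perm (Fin (2*g+2)), psi g τ)
      = C ((2 ^ g * (g + 1) : ℕ) : ℂ) *
        ((∑ σ : Equiv.Perm (Fin (2*g+2)),
          rename (σ : Fin (2*g+2) → Fin (2*g+2)) H) *
          ∏ τ : Equiv.Perm (Fin (2*g+2)), psi g τ) := by
    rw [← Finset.mul_sum, Finset.sum_mul]
  have hR : ∑ σ : Equiv.Perm (Fin (2*g+2)),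
      (-(DeltaFull (2 * g + 2)) ^ 2 *
        ∑ e ∈ Eset g, ∏ τ ∈ Finset.univ.erase (σ * e), psi g τ) = 0 := by
    rw [← Finset.mul_sum, Finset.sum_comm]
    have hz : ∀ e ∈ Eset g,
        ∑ σ : Equiv.Perm (Fin (2*g+2)),
          ∏ τ ∈ Finset.univ.erase (σ * e), psi g τ = 0 := by
      intro e _
      rw [Fintype.sum_equiv (Equiv.mulRight e)
        (fun σ => ∏ τ ∈ Finset.univ.erase (σ * e), psi g τ)
        (fun τ₀ => ∏ τ ∈ Finset.univ.erase τ₀, psi g τ)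
        (fun σ => by rw [Equiv.coe_mulRight])]
      exact poly_key g hg
    rw [Finset.sum_congr rfl hz, Finset.sum_const, smul_zero, mul_zero]
  rw [hL, hR] at total
  have hC : (C ((2 ^ g * (g + 1) : ℕ) : ℂ) : MvPolynomial (Fin (2*g+2)) ℂ) ≠ 0 := by
    rw [Ne, MvPolynomial.C_eq_zero, Nat.cast_eq_zero]
    positivity
  have hQ : (∏ τ : Equiv.Perm (Fin (2*g+2)), psi g τ) ≠ 0 := by
    rw [Finset.prod_ne_zero_iff]
    exact fun τ _ => psi_ne_zero g τ
  rcases mul_eq_zero.mp total with h | h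
  · exact absurd h hC
  · rcases mul_eq_zero.mp h with h2 | h2
    · exact h2
    · exact absurd h2 hQ
end

section
/- Let g ≥ 2 and let f ∈ S_{g-1}(2g+2) be a binary invariant of weight g−1 in 2g+2 variables, invariant under the group S_U stabilizing the parity partition of indices. If f(a_1,...,a_{2g-1}, u, u, u) = 0 identically (as a polynomial in a_1,...,a_{2g-1}, u), then f = 0. -/
open MvPolynomial

set_option maxHeartbeats 1000000
set_option synthInstance.maxHeartbeats 400000

/-- `σ` lies in the theta group `S_U`. -/
def InSU (n : ℕ) (σ : Equiv.Perm (Fin n)) : Prop :=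
  (∀ i, (σ i).val % 2 = i.val % 2) ∨ (∀ i, (σ i).val % 2 ≠ i.val % 2)

noncomputable section Aux
variable {n : ℕ}

local notation "A" => MvPolynomial (Fin n) ℂ

/-- Substitute `s` (a fresh polynomial variable) for all variables in `S`. -/
noncomputable def phi (S : Finset (Fin n)) : A →ₐ[ℂ] Polynomial A :=
  aeval (fun i => if i ∈ S then Polynomial.X else Polynomial.C (X i))

lemma phi_eval (S : Finset (Fin n)) (p : A) (x : Fin n → ℂ) (s : ℂ) :
    Polynomial.eval s (Polynomial.map (eval x) (phi S p)) =
      eval (fun i => if i ∈ S then s else x i) p := by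
  have h : ((Polynomial.evalRingHom s).comp ((Polynomial.mapRingHom (eval x)).comp
      (phi (n := n) S).toRingHom)) = (eval (fun i => if i ∈ S then s else x i)) := by
    apply MvPolynomial.ringHom_ext
    · intro c; simp [phi]
    · intro i; by_cases h : i ∈ S <;> simp [phi, h]
  exact RingHom.congr_fun h p

lemma eval_aeval' (g : Fin n → A) (x : Fin n → ℂ) (p : A) :
    eval x (aeval g p) = eval (fun i => eval x (g i)) p := by
  have h : ((eval x : A →+* ℂ).comp (aeval g : A →ₐ[ℂ] A).toRingHom)
      = (eval (fun i => eval x (g i))) := by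
    apply MvPolynomial.ringHom_ext
    · intro c; simp
    · intro i; simp
  exact RingHom.congr_fun h p

lemma phi_monomial (S : Finset (Fin n)) (α : Fin n →₀ ℕ) (c : ℂ) :
    phi S (monomial α c) =
      Polynomial.C (C c * ∏ i ∈ Sᶜ, X i ^ α i) * Polynomial.X ^ (∑ i ∈ S, α i) := by
  rw [phi, aeval_monomial, Finsupp.prod_pow]
  rw [← Finset.prod_mul_prod_compl S]
  have h1 : (∏ i ∈ S, (if i ∈ S then (Polynomial.X : Polynomial A)
      else Polynomial.C (X i)) ^ α i) = Polynomial.X ^ (∑ i ∈ S, α i) := by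
    rw [← Finset.prod_pow_eq_pow_sum]
    exact Finset.prod_congr rfl fun i hi => by rw [if_pos hi]
  have h2 : (∏ i ∈ Sᶜ, (if i ∈ S then (Polynomial.X : Polynomial A)
      else Polynomial.C (X i)) ^ α i) = Polynomial.C (∏ i ∈ Sᶜ, X i ^ α i) := by
    rw [map_prod]
    exact Finset.prod_congr rfl fun i hi => by
      rw [if_neg (Finset.mem_compl.mp hi), map_pow]
  rw [h1, h2]
  have : (algebraMap ℂ (Polynomial A)) c = Polynomial.C (C c) := rfl
  rw [this, map_mul]
  ring

lemma phi_natDegree_le (S : Finset (Fin n)) (p : A) :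
    (phi S p).natDegree ≤ ∑ i ∈ S, degreeOf i p := by
  conv_lhs => rw [p.as_sum, map_sum]
  apply Polynomial.natDegree_sum_le_of_forall_le
  intro α hα
  rw [phi_monomial]
  refine le_trans (Polynomial.natDegree_C_mul_le _ _) ?_
  rw [Polynomial.natDegree_X_pow]
  exact Finset.sum_le_sum fun i _ => monomial_le_degreeOf i hα

lemma eq_zero_of_eval_nonzero (p : A)
    (h : ∀ x : Fin n → ℂ, (∀ i, x i ≠ 0) → eval x p = 0) : p = 0 := by
  have hprod : p * ∏ i, X i = 0 := by
    apply MvPolynomial.funext (q := 0)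
    intro x
    rw [map_zero, map_mul]
    by_cases hx : ∀ i, x i ≠ 0
    · rw [h x hx, zero_mul]
    · push_neg at hx
      obtain ⟨i, hi⟩ := hx
      rw [map_prod]
      rw [Finset.prod_eq_zero (Finset.mem_univ i) (by simp [hi])]
      ring
  rcases mul_eq_zero.mp hprod with h' | h'
  · exact h'
  · exact absurd h' (Finset.prod_ne_zero_iff.mpr fun i _ => X_ne_zero i)

lemma coeff_eq_zero_of_pair_vanish (p : A) (a b : Fin n) (_hab : a ≠ b)
    (h : ∀ y : Fin n → ℂ, y a = 0 → y b = 0 → eval y p = 0) :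
    ∀ α : Fin n →₀ ℕ, α a = 0 → α b = 0 → coeff α p = 0 := by
  intro α ha hb
  set g : Fin n → A := fun i => if i = a ∨ i = b then 0 else X i with hg
  have hzero : aeval g p = 0 := by
    apply MvPolynomial.funext (q := 0)
    intro x
    rw [map_zero, eval_aeval']
    apply h
    · simp [hg]
    · simp [hg]
  have haux : ∀ (β : Fin n →₀ ℕ) (c : ℂ), β a = 0 → β b = 0 →
      aeval g (monomial β c) = monomial β c := by
    intro β c hba hbb
    rw [aeval_monomial, Finsupp.prod_pow]
    have : (∏ i, g i ^ β i) = ∏ i, (X i : A) ^ β i := by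
      apply Finset.prod_congr rfl
      intro i _
      by_cases hia : i = a
      · subst hia; rw [hba, pow_zero, pow_zero]
      by_cases hib : i = b
      · subst hib; rw [hbb, pow_zero, pow_zero]
      · simp [hg, hia, hib]
    rw [this, monomial_eq, Finsupp.prod_pow]
    rfl
  have haux2 : ∀ (β : Fin n →₀ ℕ) (c : ℂ), ¬(β a = 0 ∧ β b = 0) →
      aeval g (monomial β c) = 0 := by
    intro β c hβ
    rw [aeval_monomial, Finsupp.prod_pow]
    rcases Decidable.not_and_iff_or_not.mp hβ with hba | hbb
    · rw [Finset.prod_eq_zero (Finset.mem_univ a) (by simp [hg, zero_pow hba]), mul_zero]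
    · rw [Finset.prod_eq_zero (Finset.mem_univ b) (by simp [hg, zero_pow hbb]), mul_zero]
  have hcoeff : coeff α (aeval g p) = coeff α p := by
    conv_lhs => rw [p.as_sum, map_sum]
    rw [MvPolynomial.coeff_sum]
    rw [Finset.sum_eq_single α]
    · rw [haux α _ ha hb, coeff_monomial, if_pos rfl]
    · intro β _ hβα
      by_cases hβ : β a = 0 ∧ β b = 0
      · rw [haux β _ hβ.1 hβ.2, coeff_monomial, if_neg (fun h => hβα h)]
      · rw [haux2 β _ hβ, coeff_zero]
    · intro hα
      rw [MvPolynomial.notMem_support_iff.mp hα, map_zero, map_zero, coeff_zero]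
  rw [hzero] at hcoeff
  simpa using hcoeff.symm

lemma phi_eval_X_insert (S : Finset (Fin n)) (i0 : Fin n) (p : A) :
    Polynomial.eval (X i0 : A) (phi S p) = Polynomial.eval (X i0) (phi (insert i0 S) p) := by
  have h : (Polynomial.evalRingHom (X i0 : A)).comp (phi (n := n) S).toRingHom
      = (Polynomial.evalRingHom (X i0 : A)).comp (phi (n := n) (insert i0 S)).toRingHom := by
    apply MvPolynomial.ringHom_ext
    · intro c; simp [phi]
    · intro i
      by_cases h1 : i ∈ S
      · simp [phi, h1, Finset.mem_insert_of_mem h1]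
      by_cases h2 : i = i0
      · subst h2; simp [phi, h1, Finset.mem_insert_self]
      · simp [phi, h1, h2, Finset.mem_insert]
  exact RingHom.congr_fun h p

lemma core_dvd (S : Finset (Fin n)) (j : Fin n) (hj : j ∉ S) (p : A)
    (htrip : ∀ a ∈ S, ∀ b ∈ S, a ≠ b → ∀ y : Fin n → ℂ,
      y a = y j → y b = y j → eval y p = 0) :
    (Polynomial.X - Polynomial.C (X j)) ^ (S.card - 1) ∣ phi S p := by
  classical
  set G : A := aeval (fun i => if i ∈ S then X i + X j else X i) p with hG
  have hsupp : ∀ α ∈ G.support, ∀ a ∈ S, ∀ b ∈ S, a ≠ b → ¬(α a = 0 ∧ α b = 0) := by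
    intro α hα a ha b hb hab hcon
    refine MvPolynomial.mem_support_iff.mp hα
      (coeff_eq_zero_of_pair_vanish G a b hab ?_ α hcon.1 hcon.2)
    intro y hya hyb
    rw [hG, eval_aeval']
    have hja : a ≠ j := fun h => hj (h ▸ ha)
    have hjb : b ≠ j := fun h => hj (h ▸ hb)
    apply htrip a ha b hb hab
    · simp [ha, hj, hya]
    · simp [hb, hj, hyb]
  have hsum : ∀ α ∈ G.support, S.card - 1 ≤ ∑ i ∈ S, α i := by
    intro α hα
    set Z := S.filter (fun t => α t = 0) with hZ
    have hZ1 : Z.card ≤ 1 := by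
      by_contra hcon
      obtain ⟨a, ha, b, hb, hab⟩ := Finset.one_lt_card.mp (lt_of_not_ge hcon)
      rw [hZ, Finset.mem_filter] at ha hb
      exact hsupp α hα a ha.1 b hb.1 hab ⟨ha.2, hb.2⟩
    have h1 : (S \ Z).card ≤ ∑ i ∈ S \ Z, α i := by
      rw [Finset.card_eq_sum_ones]
      apply Finset.sum_le_sum
      intro i hi
      rw [Finset.mem_sdiff, hZ, Finset.mem_filter] at hi
      have : α i ≠ 0 := fun h => hi.2 ⟨hi.1, h⟩
      omega
    have h2 : ∑ i ∈ S \ Z, α i ≤ ∑ i ∈ S, α i :=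
      Finset.sum_le_sum_of_subset (Finset.sdiff_subset)
    have h3 : S.card - 1 ≤ (S \ Z).card := by
      have := Finset.card_sdiff_of_subset (show Z ⊆ S from Finset.filter_subset _ _)
      omega
    omega
  have hdvd : Polynomial.X ^ (S.card - 1) ∣ phi S G := by
    conv_rhs => rw [G.as_sum, map_sum]
    apply Finset.dvd_sum
    intro α hα
    rw [phi_monomial]
    exact Dvd.dvd.mul_left (pow_dvd_pow _ (hsum α hα)) _
  have hcomp : phi S p = (phi S G).comp (Polynomial.X - Polynomial.C (X j)) := by
    have h : ((Polynomial.aeval ((Polynomial.X : Polynomial A) - Polynomial.C (X j))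
          : Polynomial A →ₐ[A] Polynomial A).toRingHom.comp
        ((phi (n := n) S).toRingHom.comp
          (aeval (fun i => if i ∈ S then X i + X j else X i) : A →ₐ[ℂ] A).toRingHom))
        = (phi (n := n) S).toRingHom := by
      apply MvPolynomial.ringHom_ext
      · intro c
        simp [phi]
      · intro i
        by_cases h1 : i ∈ S
        · simp [phi, h1, hj]
        by_cases h2 : i = j
        · subst h2; simp [phi, h1]
        · simp [phi, h1, h2]
    have := RingHom.congr_fun h p
    simp only [RingHom.coe_comp, Function.comp_apply, AlgHom.toRingHom_eq_coe,
      RingHom.coe_coe] at this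
    rw [← this, ← hG]
    rw [Polynomial.aeval_def, Polynomial.algebraMap_eq]
    rfl
  obtain ⟨h, hh⟩ := hdvd
  rw [hcomp, hh, Polynomial.mul_comp, Polynomial.pow_comp, Polynomial.X_comp]
  exact Dvd.intro _ rfl

lemma step_zero (w : ℕ) (p : A) (O E : Finset (Fin n)) (hOE : Disjoint O E)
    (hcard : O.card = E.card) (hwc : w + 2 ≤ E.card)
    (hdeg : ∀ i, degreeOf i p ≤ w)
    (htrip : ∀ a ∈ O, ∀ b ∈ O, a ≠ b → ∀ j ∈ E, ∀ y : Fin n → ℂ,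
      y a = y j → y b = y j → eval y p = 0)
    (S : Finset (Fin n)) (hS : S ⊆ O) (hSne : S.Nonempty)
    (hins : ∀ i0 ∈ O \ S, phi (insert i0 S) p = 0) :
    phi S p = 0 := by
  classical
  by_contra hp
  set m := S.card with hm
  have hm1 : 1 ≤ m := Finset.card_pos.mpr hSne
  have hmO : m ≤ O.card := Finset.card_le_card hS
  have θinj : Function.Injective (algebraMap A (FractionRing A)) :=
    IsFractionRing.injective A (FractionRing A)
  set qK : Polynomial (FractionRing A) := (phi S p).map (algebraMap A (FractionRing A))
    with hqK
  have hqKne : qK ≠ 0 := by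
    rw [hqK, Ne, Polynomial.map_eq_zero_iff θinj]
    exact hp
  set T : Finset (Fin n) := E ∪ (O \ S) with hT
  set e : Fin n → ℕ := fun j => if j ∈ E then m - 1 else 1 with he
  set F : Fin n → Polynomial (FractionRing A) :=
    fun j => (Polynomial.X - Polynomial.C (algebraMap A (FractionRing A) (X j))) ^ e j with hF
  have hxinj : Function.Injective (fun i : Fin n => algebraMap A (FractionRing A) (X i)) :=
    θinj.comp (X_injective)
  have hpair : (↑T : Set (Fin n)).Pairwise (Function.onFun IsCoprime F) := by
    intro a _ b _ hab
    exact ((Polynomial.pairwise_coprime_X_sub_C hxinj) hab).pow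
  have hdisjES : Disjoint E S := (hOE.symm.mono_right hS)
  have hdvdK : ∀ j ∈ T, F j ∣ qK := by
    intro j hj
    rw [hT, Finset.mem_union] at hj
    rcases hj with hj | hj
    · have hjS : j ∉ S := fun h => (Finset.disjoint_left.mp hdisjES) hj h
      have hd := core_dvd S j hjS p (fun a ha b hb hab y h1 h2 =>
        htrip a (hS ha) b (hS hb) hab j hj y h1 h2)
      have := Polynomial.map_dvd (algebraMap A (FractionRing A)) hd
      rw [Polynomial.map_pow, Polynomial.map_sub, Polynomial.map_X, Polynomial.map_C] at this
      simpa [hF, he, hj, hm] using this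
    · have hjE : j ∉ E := fun h =>
        (Finset.disjoint_left.mp hOE) (Finset.mem_sdiff.mp hj).1 h
      have hroot : Polynomial.IsRoot (phi S p) (X j) := by
        unfold Polynomial.IsRoot
        rw [phi_eval_X_insert S j p, hins j hj, Polynomial.eval_zero]
      have hd := Polynomial.dvd_iff_isRoot.mpr hroot
      have := Polynomial.map_dvd (algebraMap A (FractionRing A)) hd
      rw [Polynomial.map_sub, Polynomial.map_X, Polynomial.map_C] at this
      simpa [hF, he, hjE] using this
  have hproddvd : (∏ j ∈ T, F j) ∣ qK := Finset.prod_dvd_of_coprime hpair hdvdK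
  have hFne : ∀ j ∈ T, F j ≠ 0 :=
    fun j _ => ((Polynomial.monic_X_sub_C _).pow _).ne_zero
  have hdegprod : (∏ j ∈ T, F j).natDegree = ∑ j ∈ T, e j := by
    rw [Polynomial.natDegree_prod _ _ hFne]
    apply Finset.sum_congr rfl
    intro j _
    rw [hF, Polynomial.natDegree_pow, Polynomial.natDegree_X_sub_C, mul_one]
  have hdisj2 : Disjoint E (O \ S) := hOE.symm.mono_right (Finset.sdiff_subset)
  have hsumT : ∑ j ∈ T, e j = E.card * (m - 1) + (O.card - m) := by
    have hA : ∑ j ∈ E, e j = E.card * (m - 1) := by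
      calc ∑ j ∈ E, e j = ∑ _j ∈ E, (m - 1) :=
            Finset.sum_congr rfl (fun j hj => by rw [he]; exact if_pos hj)
        _ = E.card * (m - 1) := by rw [Finset.sum_const, smul_eq_mul]
    have hB : ∑ j ∈ O \ S, e j = O.card - m := by
      calc ∑ j ∈ O \ S, e j = ∑ _j ∈ O \ S, 1 :=
            Finset.sum_congr rfl (fun j hj => by
              rw [he]
              exact if_neg (fun h =>
                (Finset.disjoint_left.mp hOE) (Finset.mem_sdiff.mp hj).1 h))
        _ = O.card - m := by rw [Finset.sum_const, smul_eq_mul, mul_one, Finset.card_sdiff_of_subset hS]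
    rw [hT, Finset.sum_union hdisj2, hA, hB]
  have hdeg1 : (∏ j ∈ T, F j).natDegree ≤ qK.natDegree :=
    Polynomial.natDegree_le_of_dvd hproddvd hqKne
  have hdeg2 : qK.natDegree ≤ m * w := by
    rw [hqK, Polynomial.natDegree_map_eq_of_injective θinj]
    refine le_trans (phi_natDegree_le S p) ?_
    calc ∑ i ∈ S, degreeOf i p ≤ ∑ _i ∈ S, w := Finset.sum_le_sum fun i _ => hdeg i
    _ = m * w := by rw [Finset.sum_const, smul_eq_mul]
  have hcontr : (m : ℤ) * (w + 1) ≤ (E.card : ℤ) * (m - 1) + ((O.card : ℤ) - m) := by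
    have h1 : (w : ℤ) + 2 ≤ (E.card : ℤ) := by exact_mod_cast hwc
    have h2 : (1 : ℤ) ≤ (m : ℤ) := by exact_mod_cast hm1
    have h3 : (m : ℤ) ≤ (O.card : ℤ) := by exact_mod_cast hmO
    have h4 : (O.card : ℤ) = (E.card : ℤ) := by exact_mod_cast hcard
    nlinarith
  have hcast1 : ((E.card * (m - 1) + (O.card - m) : ℕ) : ℤ)
      = (E.card : ℤ) * ((m : ℤ) - 1) + ((O.card : ℤ) - (m : ℤ)) := by
    push_cast [Nat.cast_sub hm1, Nat.cast_sub hmO]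
    ring
  have hfinal : (m : ℤ) * (w + 1) ≤ (m : ℤ) * w := by
    have := hdeg1
    rw [hdegprod, hsumT] at this
    have hZ : ((E.card * (m - 1) + (O.card - m) : ℕ) : ℤ) ≤ ((m * w : ℕ) : ℤ) := by
      exact_mod_cast le_trans this hdeg2
    rw [hcast1] at hZ
    push_cast at hZ ⊢
    linarith [hcontr]
  have : (m : ℤ) ≥ 1 := by exact_mod_cast hm1
  linarith


theorem generic_vanish (w : ℕ) (p : A) (O E : Finset (Fin n)) (hOE : Disjoint O E)
    (hcard : O.card = E.card) (hwc : w + 2 ≤ E.card)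
    (hdeg : ∀ i, degreeOf i p ≤ w)
    (htrip : ∀ a ∈ O, ∀ b ∈ O, a ≠ b → ∀ j ∈ E, ∀ y : Fin n → ℂ,
      y a = y j → y b = y j → eval y p = 0) :
    p = 0 := by
  classical
  have hall : ∀ t : ℕ, ∀ S : Finset (Fin n), S ⊆ O → S.Nonempty →
      S.card + t = O.card → phi S p = 0 := by
    intro t
    induction t with
    | zero =>
      intro S hS hne hcardS
      apply step_zero w p O E hOE hcard hwc hdeg htrip S hS hne
      intro i0 hi0
      have hSO : S = O := Finset.eq_of_subset_of_card_le hS (by omega)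
      rw [hSO, Finset.sdiff_self] at hi0
      exact absurd hi0 (Finset.notMem_empty i0)
    | succ t ih =>
      intro S hS hne hcardS
      apply step_zero w p O E hOE hcard hwc hdeg htrip S hS hne
      intro i0 hi0
      rw [Finset.mem_sdiff] at hi0
      apply ih (insert i0 S) (Finset.insert_subset hi0.1 hS)
        (Finset.insert_nonempty _ _)
      rw [Finset.card_insert_of_notMem hi0.2]
      omega
  have hO1 : 0 < O.card := by omega
  obtain ⟨i0, hi0⟩ := Finset.card_pos.mp hO1
  have h1 : phi {i0} p = 0 := by
    apply hall (O.card - 1) {i0} (Finset.singleton_subset_iff.mpr hi0)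
      (Finset.singleton_nonempty i0)
    rw [Finset.card_singleton]
    omega
  apply MvPolynomial.funext (q := 0)
  intro x
  have := phi_eval {i0} p x (x i0)
  rw [h1] at this
  simp only [Polynomial.map_zero, Polynomial.eval_zero, map_zero] at this ⊢
  rw [this]
  have hfun : (fun i => if i ∈ ({i0} : Finset (Fin n)) then x i0 else x i) = x := by
    funext i
    by_cases h : i = i0 <;> simp [h]
  rw [hfun]

end Aux

lemma univU (p r : Polynomial ℂ) (c : ℂ) (N : ℕ)
    (h : ∀ z : ℂ, z ≠ 0 → p.eval z = r.eval (-1/z) * z ^ N * c) :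
    ∀ m : ℕ, N < m → p.coeff m = 0 := by
  intro m hm
  set E := r.natDegree with hE
  set P1 : Polynomial ℂ := Polynomial.X ^ E * p with hP1
  set P2 : Polynomial ℂ := c • ∑ k ∈ Finset.range (E + 1),
      (r.coeff k * (-1) ^ k) • (Polynomial.X : Polynomial ℂ) ^ (N + E - k) with hP2
  have heq : P1 = P2 := by
    have hev : ∀ z : ℂ, z ≠ 0 → P1.eval z = P2.eval z := by
      intro z hz
      rw [hP1, hP2, Polynomial.eval_mul, Polynomial.eval_pow, Polynomial.eval_X,
        h z hz, Polynomial.eval_smul, Polynomial.eval_finset_sum]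
      rw [Polynomial.eval_eq_sum_range (p := r) (-1/z)]
      rw [Finset.sum_mul, Finset.sum_mul, Finset.mul_sum, Finset.smul_sum]
      apply Finset.sum_congr rfl
      intro k hk
      rw [Finset.mem_range] at hk
      have hk' : k ≤ N + E := by omega
      simp only [Polynomial.eval_smul, Polynomial.eval_pow, Polynomial.eval_X, smul_eq_mul]
      have hzpow : (-1/z) ^ k * z ^ (N + E) = (-1) ^ k * z ^ (N + E - k) := by
        rw [div_pow, neg_pow, one_pow, ← Nat.sub_add_cancel hk', pow_add]
        field_simp
        ring
        simp
      calc z ^ E * (r.coeff k * (-1/z) ^ k * z ^ N * c)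
          = r.coeff k * ((-1/z) ^ k * z ^ (N + E)) * c := by rw [pow_add]; ring
        _ = r.coeff k * ((-1) ^ k * z ^ (N + E - k)) * c := by rw [hzpow]
        _ = c * (r.coeff k * (-1) ^ k * z ^ (N + E - k)) := by ring
    have hsub : P1 - P2 = 0 := by
      apply Polynomial.eq_zero_of_infinite_isRoot
      apply Set.Infinite.mono (s := {z : ℂ | z ≠ 0})
      · intro z hz
        simp only [Set.mem_setOf_eq, Polynomial.IsRoot.def, Polynomial.eval_sub]
        rw [hev z hz, sub_self]
      · exact Set.Finite.infinite_compl (Set.finite_singleton 0)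
    exact sub_eq_zero.mp hsub
  have h1 : P1.coeff (E + m) = p.coeff m := by
    rw [hP1, add_comm, Polynomial.coeff_X_pow_mul]
  have h2 : P2.coeff (E + m) = 0 := by
    rw [hP2, Polynomial.coeff_smul, Polynomial.finset_sum_coeff]
    rw [Finset.sum_eq_zero, smul_zero]
    intro k hk
    rw [Finset.mem_range] at hk
    rw [Polynomial.coeff_smul, Polynomial.coeff_X_pow, if_neg (by omega), smul_zero]
  rw [← h1, heq, h2]

lemma degree_bound' {n w : ℕ} (f : MvPolynomial (Fin (n+1)) ℂ)
    (hinv : ∀ a : Fin (n+1) → ℂ, (∀ i, a i ≠ 0) →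
      eval a f = eval (fun i => -1 / a i) f * ∏ i, (a i) ^ w) :
    ∀ i, degreeOf i f ≤ w := by
  intro i
  classical
  set τ := Equiv.swap (0 : Fin (n+1)) i with hτ
  set f' := rename (⇑τ) f with hf'
  have hτi : τ i = 0 := Equiv.swap_apply_right 0 i
  have hd : degreeOf i f = degreeOf 0 f' := by
    rw [hf', ← hτi, degreeOf_rename_of_injective τ.injective]
  have hinv' : ∀ a : Fin (n+1) → ℂ, (∀ i, a i ≠ 0) →
      eval a f' = eval (fun i => -1 / a i) f' * ∏ i, (a i) ^ w := by
    intro a ha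
    rw [hf', eval_rename, eval_rename]
    have h1 := hinv (a ∘ τ) (fun i => ha (τ i))
    rw [h1]
    have : ∏ i : Fin (n+1), (a ∘ ⇑τ) i ^ w = ∏ i : Fin (n+1), a i ^ w :=
      Equiv.prod_comp τ (fun j => a j ^ w)
    rw [this]
    rfl
  rw [hd, ← natDegree_finSuccEquiv]
  apply Polynomial.natDegree_le_iff_coeff_eq_zero.mpr
  intro k hk
  apply eq_zero_of_eval_nonzero
  intro y hy
  set y' : Fin n → ℂ := fun j => -1 / y j with hy'
  set px := ((finSuccEquiv ℂ n f').map (eval y)) with hpx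
  set rx := ((finSuccEquiv ℂ n f').map (eval y')) with hrx
  set cc : ℂ := ∏ j, (y j) ^ w with hcc
  have hfe : ∀ z : ℂ, z ≠ 0 → px.eval z = rx.eval (-1/z) * z ^ w * cc := by
    intro z hz
    rw [hpx, hrx, ← eval_eq_eval_mv_eval', ← eval_eq_eval_mv_eval']
    have hnz : ∀ i, (Fin.cons z y : Fin (n+1) → ℂ) i ≠ 0 := by
      intro i
      refine Fin.cases ?_ ?_ i
      · simpa using hz
      · intro j; simpa using hy j
    rw [hinv' (Fin.cons z y) hnz]
    have hfun : (fun i => -1 / (Fin.cons z y : Fin (n+1) → ℂ) i)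
        = (Fin.cons (-1/z) y' : Fin (n+1) → ℂ) := by
      funext i
      refine Fin.cases ?_ ?_ i
      · simp
      · intro j; simp [hy']
    have hprod : ∏ i, ((Fin.cons z y : Fin (n+1) → ℂ) i) ^ w = z ^ w * cc := by
      have h2 : (fun i => (Fin.cons z y : Fin (n+1) → ℂ) i ^ w)
          = (Fin.cons (z ^ w) (fun j => (y j) ^ w) : Fin (n+1) → ℂ) := by
        funext i
        refine Fin.cases ?_ ?_ i <;> simp
      rw [h2, Fin.prod_cons, hcc]
    rw [hfun, hprod]
    ring
  have := univU px rx cc w hfe k hk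
  rw [hpx, Polynomial.coeff_map] at this
  exact this



lemma swap_parity {n : ℕ} (x y : Fin n) (h : x.1 % 2 = y.1 % 2) (i : Fin n) :
    ((Equiv.swap x y) i).1 % 2 = i.1 % 2 := by
  rcases eq_or_ne i x with rfl | hx
  · rw [Equiv.swap_apply_left]; omega
  rcases eq_or_ne i y with rfl | hy
  · rw [Equiv.swap_apply_right]; omega
  · rw [Equiv.swap_apply_of_ne_of_ne hx hy]

lemma ne_of_parity {n : ℕ} {x y : Fin n} (h : x.1 % 2 ≠ y.1 % 2) : x ≠ y :=
  fun he => h (by rw [he])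

lemma triple_vanish (g : ℕ) (hg : 2 ≤ g) (f : MvPolynomial (Fin (2*g+2)) ℂ)
    (hSU : ∀ σ : Equiv.Perm (Fin (2*g+2)), InSU (2*g+2) σ →
      rename (⇑σ) f = f)
    (hvan : ∀ (b : Fin (2*g-1) → ℂ) (u : ℂ),
      eval (fun i : Fin (2*g+2) =>
        if h : i.val < 2*g-1 then b ⟨i.val, h⟩ else u) f = 0)
    (a b j : Fin (2*g+2)) (hpa : a.1 % 2 = 1) (hpb : b.1 % 2 = 1) (hpj : j.1 % 2 = 0)
    (hab : a ≠ b) (y : Fin (2*g+2) → ℂ) (hya : y a = y j) (hyb : y b = y j) :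
    eval y f = 0 := by
  obtain ⟨p1, hp1v⟩ : {x : Fin (2*g+2) // x.1 = 2*g-1} := ⟨⟨2*g-1, by omega⟩, rfl⟩
  obtain ⟨p2, hp2v⟩ : {x : Fin (2*g+2) // x.1 = 2*g} := ⟨⟨2*g, by omega⟩, rfl⟩
  obtain ⟨p3, hp3v⟩ : {x : Fin (2*g+2) // x.1 = 2*g+1} := ⟨⟨2*g+1, by omega⟩, rfl⟩
  have hp1 : p1.1 % 2 = 1 := by omega
  have hp2 : p2.1 % 2 = 0 := by omega
  have hp3 : p3.1 % 2 = 1 := by omega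
  set s1 := Equiv.swap p1 a with hs1d
  set cc := s1 p3 with hccd
  have hcc : cc.1 % 2 = 1 := by
    rw [hccd, hs1d, swap_parity p1 a (by omega), hp3]
  set s2 := Equiv.swap cc b with hs2d
  set s3 := Equiv.swap p2 j with hs3d
  set σ := s3 * (s2 * s1) with hσd
  have hσ : ∀ i, σ i = s3 (s2 (s1 i)) := fun i => rfl
  have hpar : ∀ i, (σ i).1 % 2 = i.1 % 2 := by
    intro i
    rw [hσ, hs3d, swap_parity p2 j (by omega), hs2d, swap_parity cc b (by omega),
      hs1d, swap_parity p1 a (by omega)]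
  have hs1p1 : s1 p1 = a := Equiv.swap_apply_left _ _
  have hp1p3 : p1 ≠ p3 := fun h => by
    rw [Fin.ext_iff] at h; omega
  have hane : a ≠ cc := by
    intro h
    have h2 : s1 p1 = s1 p3 := by rw [hs1p1, h, hccd]
    exact hp1p3 (s1.injective h2)
  have hap2 : a ≠ p2 := ne_of_parity (by omega)
  have haj : a ≠ j := ne_of_parity (by omega)
  have hbp2 : b ≠ p2 := ne_of_parity (by omega)
  have hbj : b ≠ j := ne_of_parity (by omega)
  have hp2cc : p2 ≠ cc := ne_of_parity (by omega)
  have hp2b : p2 ≠ b := ne_of_parity (by omega)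
  have hp2a : p2 ≠ a := ne_of_parity (by omega)
  have hσ1 : σ p1 = a := by
    rw [hσ, hs1p1, hs2d, Equiv.swap_apply_of_ne_of_ne hane hab, hs3d,
      Equiv.swap_apply_of_ne_of_ne hap2 haj]
  have hσ3 : σ p3 = b := by
    rw [hσ, ← hccd, hs2d, Equiv.swap_apply_left, hs3d,
      Equiv.swap_apply_of_ne_of_ne hbp2 hbj]
  have hσ2 : σ p2 = j := by
    have hp2p1 : p2 ≠ p1 := fun h => by rw [Fin.ext_iff] at h; omega
    rw [hσ, hs1d, Equiv.swap_apply_of_ne_of_ne hp2p1 hp2a, hs2d,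
      Equiv.swap_apply_of_ne_of_ne hp2cc hp2b,
      hs3d, Equiv.swap_apply_left]
  have hren := hSU σ (Or.inl hpar)
  have heval : eval y f = eval (y ∘ ⇑σ) f := by
    conv_lhs => rw [← hren]
    rw [eval_rename]
  rw [heval]
  have hv := hvan (fun k : Fin (2*g-1) => y (σ ⟨k.1, by omega⟩)) (y j)
  have hpt : (fun i : Fin (2*g+2) =>
      if h : i.val < 2*g-1 then
        (fun k : Fin (2*g-1) => y (σ ⟨k.1, by omega⟩)) ⟨i.val, h⟩ else y j)
      = y ∘ ⇑σ := by
    funext i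
    by_cases h : i.val < 2*g-1
    · rw [dif_pos h]
      simp only [Function.comp_apply]
    · rw [dif_neg h]
      have hv3 : i.1 = 2*g-1 ∨ i.1 = 2*g ∨ i.1 = 2*g+1 := by
        have := i.isLt; omega
      have hi : i = p1 ∨ i = p2 ∨ i = p3 := by
        rcases hv3 with h1 | h1 | h1
        · exact Or.inl (Fin.ext (by omega))
        · exact Or.inr (Or.inl (Fin.ext (by omega)))
        · exact Or.inr (Or.inr (Fin.ext (by omega)))
      rcases hi with rfl | rfl | rfl
      · rw [Function.comp_apply, hσ1, hya]
      · rw [Function.comp_apply, hσ2]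
      · rw [Function.comp_apply, hσ3, hyb]
  rw [← hpt]
  exact hv

lemma filter_odd_card (g : ℕ) :
    ((Finset.univ : Finset (Fin (2*g+2))).filter (fun i => i.1 % 2 = 1)).card = g + 1 := by
  classical
  have himg : (Finset.univ : Finset (Fin (2*g+2))).filter (fun i => i.1 % 2 = 1)
      = Finset.image (fun k : Fin (g+1) => (⟨2*k.1+1, by omega⟩ : Fin (2*g+2)))
          Finset.univ := by
    ext i
    simp only [Finset.mem_filter, Finset.mem_univ, true_and, Finset.mem_image]
    constructor
    · intro hodd
      refine ⟨⟨i.1/2, by omega⟩, ?_⟩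
      apply Fin.ext
      simp only []
      show 2 * (i.1/2) + 1 = i.1
      omega
    · rintro ⟨k, rfl⟩
      show (2*k.1+1) % 2 = 1
      omega
  rw [himg, Finset.card_image_of_injective _ ?_, Finset.card_univ, Fintype.card_fin]
  intro k l hkl
  rw [Fin.ext_iff] at hkl
  exact Fin.ext (by simp at hkl; omega)

lemma filter_even_card (g : ℕ) :
    ((Finset.univ : Finset (Fin (2*g+2))).filter (fun i => i.1 % 2 = 0)).card = g + 1 := by
  classical
  have himg : (Finset.univ : Finset (Fin (2*g+2))).filter (fun i => i.1 % 2 = 0)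
      = Finset.image (fun k : Fin (g+1) => (⟨2*k.1, by omega⟩ : Fin (2*g+2)))
          Finset.univ := by
    ext i
    simp only [Finset.mem_filter, Finset.mem_univ, true_and, Finset.mem_image]
    constructor
    · intro heven
      refine ⟨⟨i.1/2, by omega⟩, ?_⟩
      apply Fin.ext
      show 2 * (i.1/2) = i.1
      omega
    · rintro ⟨k, rfl⟩
      show (2*k.1) % 2 = 0
      omega
  rw [himg, Finset.card_image_of_injective _ ?_, Finset.card_univ, Fintype.card_fin]
  intro k l hkl
  rw [Fin.ext_iff] at hkl
  exact Fin.ext (by simp at hkl; omega)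


/-- If `f ∈ S_{g-1}(2g+2)` is `S_U`-invariant (`g ≥ 2`) and
`f(a₁,…,a_{2g-1},u,u,u) = 0` identically, then `f = 0`. -/
theorem stmt16 (g : ℕ) (hg : 2 ≤ g) (f : MvPolynomial (Fin (2 * g + 2)) ℂ)
    (hinv : IsBinaryInvariant (2 * g + 2) (g - 1) f)
    (hSU : ∀ σ : Equiv.Perm (Fin (2 * g + 2)), InSU (2 * g + 2) σ →
      rename (σ : Fin (2 * g + 2) → Fin (2 * g + 2)) f = f)
    (hvan : ∀ (b : Fin (2 * g - 1) → ℂ) (u : ℂ),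
      eval (fun i : Fin (2 * g + 2) =>
        if h : i.val < 2 * g - 1 then b ⟨i.val, h⟩ else u) f = 0) :
    f = 0 := by
  classical
  set O := (Finset.univ : Finset (Fin (2*g+2))).filter (fun i => i.1 % 2 = 1) with hO
  set Ee := (Finset.univ : Finset (Fin (2*g+2))).filter (fun i => i.1 % 2 = 0) with hE
  have hOcard : O.card = g+1 := filter_odd_card g
  have hEcard : Ee.card = g+1 := filter_even_card g
  have hdisj : Disjoint O Ee := by
    rw [Finset.disjoint_left]
    intro i hiO hiE
    rw [hO, Finset.mem_filter] at hiO
    rw [hE, Finset.mem_filter] at hiE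
    omega
  have hinv' : ∀ a : Fin (2*g+2) → ℂ, (∀ i, a i ≠ 0) →
      eval a f = eval (fun i => -1 / a i) f * ∏ i, (a i) ^ (g-1) := by
    intro a ha
    have h0 := hinv 0 (-1) 1 0 (by norm_num) a (by intro i; simpa using ha i)
    simpa using h0
  have hdeg : ∀ i, degreeOf i f ≤ g-1 := degree_bound' (n := 2*g+1) f hinv'
  apply generic_vanish (g-1) f O Ee hdisj (by rw [hOcard, hEcard])
    (by rw [hEcard]; omega) hdeg
  intro a ha b hb hab j hj y hya hyb
  rw [hO, Finset.mem_filter] at ha hb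
  rw [hE, Finset.mem_filter] at hj
  exact triple_vanish g hg f hSU hvan a b j ha.2 hb.2 hj.2 hab y hya hyb
end

section
/- Let g ∈ N and let h ∈ C[a_1,...,a_{2g+2}] be a homogeneous polynomial invariant under the group S_U (permutations stabilizing the parity partition of {1,...,2g+2}), such that h vanishes whenever a_i = a_j for any i ≠ j. Then h = Δ_{B_g} Δ_{U_g} Δ_{U'_g} · f for some polynomial f, where B_g = {1,...,2g+2}, U_g = {1,3,...,2g+1}, U'_g = {2,4,...,2g+2}, and Δ_S = ∏_{i,j∈S, i>j}(a_i − a_j). -/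
open MvPolynomial

/-- `Δ_T = ∏_{i,j ∈ T, i>j} (aᵢ - aⱼ)`. -/
noncomputable def DeltaS {n : ℕ} (T : Finset (Fin n)) : MvPolynomial (Fin n) ℂ :=
  ∏ p ∈ (T ×ˢ T).filter (fun p => p.2 < p.1), (X p.1 - X p.2)

section Aux

variable {n : ℕ}

lemma X_sub_X_ne_zero (i j : Fin n) (hij : i ≠ j) :
    (X i - X j : MvPolynomial (Fin n) ℂ) ≠ 0 :=
  sub_ne_zero.mpr (fun e => hij (MvPolynomial.X_injective e))

lemma prime_X_sub_X (i j : Fin n) (hij : j ≠ i) :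
    Prime (X i - X j : MvPolynomial (Fin n) ℂ) := by
  classical
  let E := (renameEquiv ℂ (Equiv.optionSubtypeNe i).symm).trans
      (optionEquivLeft ℂ {b : Fin n // b ≠ i})
  have hE : E (X i - X j) = Polynomial.X - Polynomial.C (X ⟨j, hij⟩) := by
    simp [E, Equiv.optionSubtypeNe_symm_self, Equiv.optionSubtypeNe_symm_of_ne hij,
      optionEquivLeft_X_none, optionEquivLeft_X_some]
  rw [← MulEquiv.prime_iff E.toMulEquiv]
  have : E.toMulEquiv (X i - X j) = E (X i - X j) := rfl
  rw [this, hE]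
  exact Polynomial.prime_X_sub_C _

lemma dvd_of_eval_eq_zero (i j : Fin n) (hij : i ≠ j)
    (p : MvPolynomial (Fin n) ℂ)
    (hp : ∀ a : Fin n → ℂ, a i = a j → eval a p = 0) :
    (X i - X j) ∣ p := by
  classical
  set u : Fin n → MvPolynomial (Fin n) ℂ := fun k => if k = j then X i else X k with hu
  have key : ∀ q : MvPolynomial (Fin n) ℂ, (X j - X i) ∣ (q - aeval u q) := by
    intro q
    induction q using MvPolynomial.induction_on with
    | C c => simp [algebraMap_eq]
    | add p q hp hq =>
        have h := dvd_add hp hq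
        have e : p - aeval u p + (q - aeval u q) = p + q - aeval u (p + q) := by
          rw [map_add]; ring
        rwa [e] at h
    | mul_X q k hq =>
        rw [map_mul, aeval_X]
        by_cases hk : k = j
        · rw [show u k = X i from by rw [hu]; simp [hk], hk]
          have e : q * X j - aeval u q * X i =
              (q - aeval u q) * X j + aeval u q * (X j - X i) := by ring
          rw [e]
          exact dvd_add (hq.mul_right _) (dvd_mul_left _ _)
        · rw [show u k = X k from by rw [hu]; simp [hk]]
          have e : q * X k - aeval u q * X k = (q - aeval u q) * X k := by ring
          rw [e]
          exact hq.mul_right _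
  have hzero : aeval u p = 0 := by
    apply MvPolynomial.funext
    intro x
    have hcomp : eval x (aeval u p) = eval (fun k => if k = j then x i else x k) p := by
      rw [aeval_def, eval₂_comp_left (eval x) (algebraMap ℂ (MvPolynomial (Fin n) ℂ)) u p]
      rw [show (eval x).comp (algebraMap ℂ (MvPolynomial (Fin n) ℂ)) = RingHom.id ℂ from
        RingHom.ext fun c => by simp]
      rw [show (eval x) ∘ u = fun k => if k = j then x i else x k from funext fun k => by
        rw [hu]; by_cases hk : k = j <;> simp [hk]]
      rfl
    rw [hcomp, map_zero]
    exact hp _ (by simp [hij])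
  have h := key p
  rw [hzero, sub_zero] at h
  rwa [show (X i - X j : MvPolynomial (Fin n) ℂ) = -(X j - X i) by ring, neg_dvd]

lemma not_dvd_pairs {i j k l : Fin n} (hji : j < i) (hlk : l < k)
    (hne : (i, j) ≠ (k, l)) :
    ¬ (X i - X j : MvPolynomial (Fin n) ℂ) ∣ (X k - X l) := by
  intro hdvd
  obtain ⟨c, hc⟩ := hdvd
  have hm : ∃ m : Fin n, (m = k ∨ m = l) ∧ m ≠ i ∧ m ≠ j := by
    by_cases hk1 : k = i ∨ k = j
    · rcases hk1 with h | h
      · subst h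
        exact ⟨l, Or.inr rfl, ne_of_lt hlk, fun e => hne (by rw [e])⟩
      · subst h
        exact ⟨l, Or.inr rfl, ne_of_lt (hlk.trans hji), ne_of_lt hlk⟩
    · push_neg at hk1
      exact ⟨k, Or.inl rfl, hk1.1, hk1.2⟩
  obtain ⟨m, hm, hmi, hmj⟩ := hm
  set a : Fin n → ℂ := fun x => if x = m then 0 else 1 with ha
  have h1 : eval a (X i - X j) = 0 := by
    simp [ha, hmi.symm, Ne.symm hmi, Ne.symm hmj]
  have h2 : eval a (X k - X l) ≠ 0 := by
    rcases hm with rfl | rfl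
    · simp [ha, (hlk.ne : l ≠ m)]
    · simp [ha, (hlk.ne' : k ≠ m)]
  apply h2
  rw [hc, map_mul, h1, zero_mul]

lemma prod_pairs_dvd {S : Finset (Fin n × Fin n)} (hS : ∀ p ∈ S, p.2 < p.1)
    (h : MvPolynomial (Fin n) ℂ) (hd : ∀ p ∈ S, (X p.1 - X p.2) ∣ h) :
    (∏ p ∈ S, (X p.1 - X p.2)) ∣ h := by
  classical
  rw [← Associates.mk_dvd_mk]
  have hmk : Associates.mk (∏ p ∈ S, (X p.1 - X p.2 : MvPolynomial (Fin n) ℂ)) =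
      ∏ p ∈ S, Associates.mk (X p.1 - X p.2) :=
    map_prod Associates.mkMonoidHom _ _
  rw [hmk]
  have hinj : ∀ p ∈ S, ∀ q ∈ S,
      Associates.mk (X p.1 - X p.2 : MvPolynomial (Fin n) ℂ) =
        Associates.mk (X q.1 - X q.2) → p = q := by
    intro p hp q hq hpq
    by_contra hne
    have h1 := Associates.mk_eq_mk_iff_associated.mp hpq
    refine not_dvd_pairs (hS p hp) (hS q hq) ?_ h1.dvd
    intro e
    apply hne
    rw [Prod.ext_iff] at e ⊢
    exact e
  rw [show (∏ p ∈ S, Associates.mk (X p.1 - X p.2 : MvPolynomial (Fin n) ℂ)) =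
      ∏ x ∈ S.image (fun p : Fin n × Fin n =>
        Associates.mk (X p.1 - X p.2 : MvPolynomial (Fin n) ℂ)), x from
    (Finset.prod_image (f := id) hinj).symm]
  apply Finset.prod_primes_dvd (M₀ := Associates (MvPolynomial (Fin n) ℂ))
  · intro q hq
    obtain ⟨p, hp, rfl⟩ := Finset.mem_image.mp hq
    exact Associates.prime_mk.mpr (prime_X_sub_X p.1 p.2 (hS p hp).ne)
  · intro q hq
    obtain ⟨p, hp, rfl⟩ := Finset.mem_image.mp hq
    exact Associates.mk_dvd_mk.mpr (hd p hp)

lemma eval_DeltaS_univ (a : Fin n → ℂ) :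
    eval a (DeltaS (Finset.univ : Finset (Fin n))) = (Matrix.vandermonde a).det := by
  rw [Matrix.det_vandermonde, DeltaS, map_prod]
  simp only [map_sub, eval_X]
  rw [Finset.prod_filter, Finset.prod_product]
  have e1 : ∀ i : Fin n, ∏ j ∈ Finset.Ioi i, (a j - a i) =
      ∏ j : Fin n, if i < j then a j - a i else 1 := by
    intro i
    rw [show Finset.Ioi i = Finset.univ.filter (fun j => i < j) from by ext j; simp,
      Finset.prod_filter]
  simp only [e1]
  exact Finset.prod_comm

lemma DeltaS_univ_ne_zero : DeltaS (Finset.univ : Finset (Fin n)) ≠ 0 := by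
  rw [DeltaS]
  apply Finset.prod_ne_zero_iff.mpr
  intro p hp
  exact X_sub_X_ne_zero _ _ (Finset.mem_filter.mp hp).2.ne'

lemma rename_swap_DeltaS_univ (i j : Fin n) (hij : i ≠ j) :
    rename (Equiv.swap i j : Fin n → Fin n) (DeltaS (Finset.univ : Finset (Fin n)))
      = - DeltaS Finset.univ := by
  apply MvPolynomial.funext
  intro a
  rw [eval_rename, map_neg, eval_DeltaS_univ, eval_DeltaS_univ]
  have h2 : Matrix.vandermonde (a ∘ (Equiv.swap i j : Fin n → Fin n))
      = (Matrix.vandermonde a).submatrix (Equiv.swap i j) id := by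
    ext r c
    simp [Matrix.vandermonde, Matrix.submatrix]
  rw [h2, Matrix.det_permute, Equiv.Perm.sign_swap hij]
  simp

end Aux

/-- A homogeneous `S_U`-invariant polynomial vanishing whenever two variables are
equal is divisible by `Δ_{B_g} Δ_{U_g} Δ_{U'_g}`. -/
theorem stmt17 (g : ℕ) (hg : 1 ≤ g) (d : ℕ) (h : MvPolynomial (Fin (2 * g + 2)) ℂ)
    (hhom : h.IsHomogeneous d)
    (hSU : ∀ σ : Equiv.Perm (Fin (2 * g + 2)), InSU (2 * g + 2) σ →
      rename (σ : Fin (2 * g + 2) → Fin (2 * g + 2)) h = h)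
    (hvan : ∀ a : Fin (2 * g + 2) → ℂ,
      (∃ i j : Fin (2 * g + 2), i ≠ j ∧ a i = a j) → eval a h = 0) :
    ∃ f : MvPolynomial (Fin (2 * g + 2)) ℂ,
      h = DeltaS (Finset.univ : Finset (Fin (2 * g + 2))) *
        DeltaS (Finset.univ.filter (fun i : Fin (2 * g + 2) => i.val % 2 = 0)) *
        DeltaS (Finset.univ.filter (fun i : Fin (2 * g + 2) => i.val % 2 = 1)) * f := by
  classical
  -- Stage 1 : `Δ_B ∣ h`
  have hd1 : ∀ p ∈ ((Finset.univ ×ˢ Finset.univ :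
        Finset (Fin (2 * g + 2) × Fin (2 * g + 2))).filter (fun p => p.2 < p.1)),
      (X p.1 - X p.2) ∣ h := by
    intro p hp
    have hlt := (Finset.mem_filter.mp hp).2
    exact dvd_of_eval_eq_zero _ _ hlt.ne' h (fun a ha => hvan a ⟨p.1, p.2, hlt.ne', ha⟩)
  obtain ⟨q, hq0⟩ := prod_pairs_dvd (fun p hp => (Finset.mem_filter.mp hp).2) h hd1
  have hq : h = DeltaS (Finset.univ : Finset (Fin (2 * g + 2))) * q := by
    rw [DeltaS]; exact hq0
  -- Stage 2 : `q` is alternating within each parity class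
  have hswapq : ∀ i j : Fin (2 * g + 2), i ≠ j → i.val % 2 = j.val % 2 →
      rename (Equiv.swap i j : Fin (2 * g + 2) → Fin (2 * g + 2)) q = -q := by
    intro i j hij hpar
    have hSUij : InSU (2 * g + 2) (Equiv.swap i j) := by
      left; intro k
      rcases eq_or_ne k i with rfl | hki
      · rw [Equiv.swap_apply_left]; exact hpar.symm
      · rcases eq_or_ne k j with rfl | hkj
        · rw [Equiv.swap_apply_right]; exact hpar
        · rw [Equiv.swap_apply_of_ne_of_ne hki hkj]
    have hren := hSU _ hSUij
    rw [hq, map_mul, rename_swap_DeltaS_univ i j hij] at hren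
    apply mul_left_cancel₀ (DeltaS_univ_ne_zero (n := 2 * g + 2))
    rw [mul_neg, ← hren]; ring
  have hd2 : ∀ p ∈ ((Finset.univ ×ˢ Finset.univ :
        Finset (Fin (2 * g + 2) × Fin (2 * g + 2))).filter
        (fun p => p.2 < p.1 ∧ p.1.val % 2 = p.2.val % 2)),
      (X p.1 - X p.2) ∣ q := by
    intro p hp
    obtain ⟨-, hlt, hpar⟩ := Finset.mem_filter.mp hp
    apply dvd_of_eval_eq_zero _ _ hlt.ne' q
    intro a ha
    have hr := hswapq p.1 p.2 hlt.ne' hpar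
    have he : eval a (rename (Equiv.swap p.1 p.2 :
        Fin (2 * g + 2) → Fin (2 * g + 2)) q) = eval a q := by
      rw [eval_rename]
      have hfun : a ∘ (Equiv.swap p.1 p.2 : Fin (2 * g + 2) → Fin (2 * g + 2)) = a := by
        funext x
        rcases eq_or_ne x p.1 with rfl | h1
        · simp only [Function.comp_apply, Equiv.swap_apply_left]; exact ha.symm
        · rcases eq_or_ne x p.2 with rfl | h2
          · simp only [Function.comp_apply, Equiv.swap_apply_right]; exact ha
          · simp [Equiv.swap_apply_of_ne_of_ne h1 h2]
      rw [hfun]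
    rw [hr, map_neg] at he
    have h0 : eval a q + eval a q = 0 := by linear_combination - he
    exact add_self_eq_zero.mp h0
  obtain ⟨f, hf⟩ := prod_pairs_dvd (fun p hp => (Finset.mem_filter.mp hp).2.1) q hd2
  refine ⟨f, ?_⟩
  have hsplit : DeltaS (Finset.univ.filter (fun i : Fin (2 * g + 2) => i.val % 2 = 0)) *
      DeltaS (Finset.univ.filter (fun i : Fin (2 * g + 2) => i.val % 2 = 1)) =
      ∏ p ∈ ((Finset.univ ×ˢ Finset.univ :
        Finset (Fin (2 * g + 2) × Fin (2 * g + 2))).filter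
        (fun p => p.2 < p.1 ∧ p.1.val % 2 = p.2.val % 2)),
        (X p.1 - X p.2) := by
    rw [DeltaS, DeltaS, ← Finset.prod_union ?hdisj]
    · apply Finset.prod_congr ?_ (fun _ _ => rfl)
      ext p
      simp only [Finset.mem_union, Finset.mem_filter, Finset.mem_product, Finset.mem_univ,
        true_and]
      constructor
      · rintro (⟨⟨h1, h2⟩, h3⟩ | ⟨⟨h1, h2⟩, h3⟩) <;> exact ⟨h3, by omega⟩
      · rintro ⟨h3, hpar⟩
        rcases Nat.mod_two_eq_zero_or_one p.1.val with hh | hh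
        · exact Or.inl ⟨⟨hh, by omega⟩, h3⟩
        · exact Or.inr ⟨⟨hh, by omega⟩, h3⟩
    case hdisj =>
      rw [Finset.disjoint_left]
      rintro p hp hp'
      simp only [Finset.mem_filter, Finset.mem_product, Finset.mem_univ, true_and] at hp hp'
      omega
  rw [hq, hf, ← hsplit]
  ring
end

section
/- For nonnegative integers d_1, d_2, d with d_1, d_2 ≤ d ≤ d_1 + d_2, the number N of subspaces V ⊆ F_2^{m} ⊕ F_2^{n} of dimension d with π_1 V = V_1 and π_2 V = V_2, for fixed subspaces V_1 ⊆ F_2^m of dimension d_1 and V_2 ⊆ F_2^n of dimension d_2 (where π_i are the coordinate projections), is N = ∏_{j=0}^{d_1+d_2-d-1} (2^{d_1} − 2^j)(2^{d_2} − 2^j)/(2^{d_1+d_2-d} − 2^j); moreover these counts satisfy the identity (−1)^n 2^{n(n−1)/2} · (−1)^m 2^{m(m−1)/2} = Σ_{i=0}^{n+m} (−1)^i 2^{i(i−1)/2} N_{n,m;i} for all n, m ≥ 0. -/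
open Finset

/-- triangular number -/
def Tn (k : ℕ) : ℕ := ∑ j ∈ range k, j

lemma Tn_succ (k : ℕ) : Tn (k+1) = Tn k + k := Finset.sum_range_succ _ _

lemma two_Tn (k : ℕ) : 2 * Tn k + k = k * k := by
  induction k with
  | zero => simp [Tn]
  | succ k ih => rw [Tn_succ]; nlinarith [ih]

lemma Tn_eq (k : ℕ) : Tn k = k * (k-1) / 2 := Finset.sum_range_id k

lemma Tn_key {n m k : ℕ} (hn : k ≤ n) (hm : k ≤ m) :
    Tn (n + m - k) + Tn k = Tn n + Tn m + (n-k)*(m-k) := by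
  obtain ⟨a, rfl⟩ := Nat.exists_eq_add_of_le hn
  obtain ⟨b, rfl⟩ := Nat.exists_eq_add_of_le hm
  have e1 := two_Tn (k + a + (k + b) - k)
  have e2 := two_Tn k
  have e3 := two_Tn (k+a)
  have e4 := two_Tn (k+b)
  have h1 : k + a + (k + b) - k = a + b + k := by omega
  have h2 : k + a - k = a := by omega
  have h3 : k + b - k = b := by omega
  rw [h1] at e1 ⊢
  rw [h2, h3]
  nlinarith [e1, e2, e3, e4]

/-- `Phi x = ∏_{i=1}^{x} (2^i - 1)` -/
def Phi (x : ℕ) : ℕ := ∏ i ∈ range x, (2^(i+1) - 1)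

lemma Phi_succ (x : ℕ) : Phi (x+1) = Phi x * (2^(x+1) - 1) := Finset.prod_range_succ _ _

lemma Phi_pos (x : ℕ) : 0 < Phi x := by
  apply Finset.prod_pos
  intro i _
  have : 2 ≤ 2^(i+1) := by
    calc 2 = 2^1 := rfl
    _ ≤ 2^(i+1) := Nat.pow_le_pow_right (by norm_num) (by omega)
  omega

/-- nat-level count of injective maps value -/
def nInj (k v : ℕ) : ℕ := ∏ j ∈ range k, (2^v - 2^j)

lemma nInj_mul_Phi {k v : ℕ} (h : k ≤ v) : nInj k v * Phi (v - k) = 2^(Tn k) * Phi v := by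
  induction k with
  | zero => simp [nInj, Tn]
  | succ k ih =>
    have hk : k ≤ v := by omega
    have hfac : (2:ℕ)^v - 2^k = 2^k * (2^(v-k) - 1) := by
      rw [Nat.mul_sub, mul_one, ← pow_add]
      have : k + (v-k) = v := by omega
      rw [this]
    have hphi : Phi (v - k) = Phi (v - (k+1)) * (2^(v-k) - 1) := by
      have : v - k = (v - (k+1)) + 1 := by omega
      have h2 : v - (k+1) + 1 = v - k := by omega
      rw [this, Phi_succ, h2]
    rw [nInj, Finset.prod_range_succ, ← nInj]
    calc nInj k v * (2^v - 2^k) * Phi (v - (k+1))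
        = nInj k v * (2^k * (2^(v-k) -1)) * Phi (v - (k+1)) := by rw [hfac]
      _ = (nInj k v * (Phi (v - (k+1)) * (2^(v-k) - 1))) * 2^k := by ring
      _ = (nInj k v * Phi (v-k)) * 2^k := by rw [hphi]
      _ = (2^(Tn k) * Phi v) * 2^k := by rw [ih hk]
      _ = 2^(Tn (k+1)) * Phi v := by rw [Tn_succ, pow_add]; ring


section Qlayer

lemma PhiQ_ne (x : ℕ) : ((Phi x : ℚ)) ≠ 0 := by
  have := Phi_pos x
  positivity

/-- `ddQ n k = ∏_{j<k} (2^{n-j} - 1)` over ℚ (0 when k > n). -/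
noncomputable def ddQ (n k : ℕ) : ℚ := ∏ j ∈ range k, ((2:ℚ)^(n-j) - 1)

lemma ddQ_zero (n : ℕ) : ddQ n 0 = 1 := by simp [ddQ]

lemma ddQ_succ (n k : ℕ) : ddQ n (k+1) = ddQ n k * ((2:ℚ)^(n-k) - 1) :=
  Finset.prod_range_succ _ _

lemma ddQ_eq_zero {n k : ℕ} (h : n < k) : ddQ n k = 0 := by
  apply Finset.prod_eq_zero (Finset.mem_range.mpr h)
  simp [Nat.sub_self]

lemma ddQ_mul_Phi {n k : ℕ} (h : k ≤ n) : ddQ n k * (Phi (n-k) : ℚ) = (Phi n : ℚ) := by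
  induction k with
  | zero => simp [ddQ]
  | succ k ih =>
    have hk : k ≤ n := by omega
    have hphi : (Phi (n - k) : ℚ) = (Phi (n - (k+1)) : ℚ) * ((2:ℚ)^(n-k) - 1) := by
      have h2 : n - (k+1) + 1 = n - k := by omega
      have h3 : ((2:ℕ)^(n-(k+1)+1) - 1 : ℕ) = ((2:ℚ)^(n-(k+1)+1) - 1 : ℚ) := by
        push_cast [Nat.one_le_two_pow]
        ring
      rw [← h2, Phi_succ]
      push_cast [h3]
      rw [h2]
    rw [ddQ_succ]
    calc ddQ n k * ((2:ℚ)^(n-k)-1) * (Phi (n - (k+1)) : ℚ)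
        = ddQ n k * ((Phi (n-(k+1)) : ℚ) * ((2:ℚ)^(n-k)-1)) := by ring
      _ = ddQ n k * (Phi (n-k) : ℚ) := by rw [← hphi]
      _ = (Phi n : ℚ) := ih hk

lemma Phi_zero : Phi 0 = 1 := rfl

lemma ddQ_self (k : ℕ) : ddQ k k = (Phi k : ℚ) := by
  have := ddQ_mul_Phi (le_refl k)
  rw [Nat.sub_self, Phi_zero] at this
  simpa using this

/-- Gaussian binomial over ℚ. -/
noncomputable def gbQ (m k : ℕ) : ℚ := ddQ m k / (Phi k : ℚ)

lemma gbQ_zero (m : ℕ) : gbQ m 0 = 1 := by simp [gbQ, ddQ, Phi]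

lemma gbQ_eq_zero {m k : ℕ} (h : m < k) : gbQ m k = 0 := by simp [gbQ, ddQ_eq_zero h]

lemma gbQ_eq {m k : ℕ} (h : k ≤ m) : gbQ m k = (Phi m : ℚ) / ((Phi k : ℚ) * (Phi (m-k) : ℚ)) := by
  rw [gbQ, ← ddQ_mul_Phi h]
  rw [mul_div_mul_right _ _ (PhiQ_ne _)]

lemma pow_sub_q {a b : ℕ} (h : b ≤ a) : (2:ℚ)^(a-b) * 2^b = 2^a := by
  rw [← pow_add]; congr 1; omega

/-- q-Pascal: `gb (m+1) (k+1) = gb m (k+1) + 2^{m-k} * gb m k` for `k ≤ m`. -/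
lemma gbQ_pascal {m k : ℕ} (h : k ≤ m) :
    gbQ (m+1) (k+1) = gbQ m (k+1) + 2^(m-k) * gbQ m k := by
  rcases Nat.lt_or_ge k m with hlt | hge
  · have h1 : k + 1 ≤ m := hlt
    set x := (2:ℚ)^(k+1) with hxdef
    set y := (2:ℚ)^(m-k) with hydef
    have hxy : x * y = (2:ℚ)^(m+1) := by
      rw [hxdef, hydef, ← pow_add]
      congr 1
      omega
    have e2 : (Phi (m+1) : ℚ) = (Phi m : ℚ) * (x*y - 1) := by
      rw [Phi_succ, hxy]
      push_cast [Nat.one_le_two_pow]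
      ring
    have e3 : (Phi (k+1) : ℚ) = (Phi k : ℚ) * (x - 1) := by
      rw [Phi_succ, hxdef]
      push_cast [Nat.one_le_two_pow]
      ring
    have e4 : (Phi (m-k) : ℚ) = (Phi (m-(k+1)) : ℚ) * (y - 1) := by
      have h2 : m - (k+1) + 1 = m - k := by omega
      rw [hydef, ← h2, Phi_succ]
      push_cast [Nat.one_le_two_pow]
      ring
    have e1 : m + 1 - (k+1) = m - k := by omega
    rw [gbQ_eq (by omega : k+1 ≤ m+1), gbQ_eq h1, gbQ_eq h, e1, e2, e3, e4]
    have hx1 : x - 1 ≠ 0 := by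
      have : (1:ℚ) < x := by rw [hxdef]; exact one_lt_pow₀ (by norm_num) (by omega)
      intro hc; nlinarith
    have hy1 : y - 1 ≠ 0 := by
      have : (1:ℚ) < y := by
        rw [hydef]
        exact one_lt_pow₀ (by norm_num) (by omega)
      intro hc; nlinarith
    field_simp [PhiQ_ne]
    ring
  · have hk : k = m := le_antisymm h hge
    subst hk
    rw [show gbQ k (k+1) = 0 from gbQ_eq_zero (by omega), Nat.sub_self, pow_zero,
      gbQ, gbQ, ddQ_self, ddQ_self]
    rw [div_self (PhiQ_ne _), div_self (PhiQ_ne _)]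
    ring

end Qlayer

section Fsum

/-- per-term identity for the recursion -/
lemma term_key {n m k : ℕ} (hk : k ≤ m) :
    (-1:ℚ)^k * 2^((n-k)*(m+1-k)) * ddQ n k * gbQ m k
      + (-1:ℚ)^(k+1) * 2^((n-(k+1))*(m+1-(k+1))) * ddQ n (k+1) * (2^(m-k) * gbQ m k)
    = (-1:ℚ)^k * 2^((n-k)*(m-k)) * ddQ n k * gbQ m k := by
  rw [ddQ_succ]
  rcases lt_trichotomy k n with h | h | h
  · obtain ⟨a, ha⟩ : ∃ a, n - k = a + 1 := ⟨n - k - 1, by omega⟩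
    have hb : m + 1 - k = (m - k) + 1 := by omega
    have hn1 : n - (k+1) = a := by omega
    have hm1 : m + 1 - (k+1) = m - k := by omega
    rw [ha, hb, hn1, hm1]
    set b := m - k with hbdef
    have p1 : (2:ℚ)^((a+1)*(b+1)) = 2^(a*b) * 2^a * 2^b * 2 := by
      rw [show (a+1)*(b+1) = a*b + a + b + 1 by ring, pow_succ, pow_add, pow_add]
    have p2 : (2:ℚ)^((a+1)*b) = 2^(a*b) * 2^b := by
      rw [show (a+1)*b = a*b + b by ring, pow_add]
    rw [p1, p2]
    ring
  · subst h
    rw [Nat.sub_self, pow_zero]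
    ring
  · rw [ddQ_eq_zero h]
    ring

noncomputable def Fsum (n m : ℕ) : ℚ :=
  ∑ k ∈ Finset.range (m+1), (-1:ℚ)^k * 2^((n-k)*(m-k)) * ddQ n k * gbQ m k

lemma Fsum_zero (n : ℕ) : Fsum n 0 = 1 := by
  simp [Fsum, ddQ_zero, gbQ_zero]

lemma Fsum_succ (n m : ℕ) : Fsum n (m+1) = Fsum n m := by
  have hC : ∀ k, k ∈ Finset.range (m+1+1) → True := fun _ _ => trivial
  calc Fsum n (m+1)
      = ∑ k ∈ Finset.range (m+1), (-1:ℚ)^(k+1) * 2^((n-(k+1))*(m+1-(k+1))) * ddQ n (k+1) * gbQ (m+1) (k+1)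
        + (-1:ℚ)^0 * 2^((n-0)*(m+1-0)) * ddQ n 0 * gbQ (m+1) 0 := by
        rw [Fsum, Finset.sum_range_succ' (fun k => (-1:ℚ)^k * 2^((n-k)*(m+1-k)) * ddQ n k * gbQ (m+1) k) (m+1)]
    _ = ∑ k ∈ Finset.range (m+1),
          ((-1:ℚ)^(k+1) * 2^((n-(k+1))*(m+1-(k+1))) * ddQ n (k+1) * gbQ m (k+1)
           + (-1:ℚ)^(k+1) * 2^((n-(k+1))*(m+1-(k+1))) * ddQ n (k+1) * (2^(m-k) * gbQ m k))
        + (-1:ℚ)^0 * 2^((n-0)*(m+1-0)) * ddQ n 0 * gbQ m 0 := by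
        rw [gbQ_zero, gbQ_zero]
        congr 1
        apply Finset.sum_congr rfl
        intro k hkmem
        have hk : k ≤ m := by
          have := Finset.mem_range.mp hkmem
          omega
        rw [gbQ_pascal hk]
        ring
    _ = (∑ k ∈ Finset.range (m+1), (-1:ℚ)^(k+1) * 2^((n-(k+1))*(m+1-(k+1))) * ddQ n (k+1) * gbQ m (k+1)
          + (-1:ℚ)^0 * 2^((n-0)*(m+1-0)) * ddQ n 0 * gbQ m 0)
        + ∑ k ∈ Finset.range (m+1), (-1:ℚ)^(k+1) * 2^((n-(k+1))*(m+1-(k+1))) * ddQ n (k+1) * (2^(m-k) * gbQ m k) := by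
        rw [Finset.sum_add_distrib]
        ring
    _ = ∑ k ∈ Finset.range (m+1+1), (-1:ℚ)^k * 2^((n-k)*(m+1-k)) * ddQ n k * gbQ m k
        + ∑ k ∈ Finset.range (m+1), (-1:ℚ)^(k+1) * 2^((n-(k+1))*(m+1-(k+1))) * ddQ n (k+1) * (2^(m-k) * gbQ m k) := by
        rw [Finset.sum_range_succ' (fun k => (-1:ℚ)^k * 2^((n-k)*(m+1-k)) * ddQ n k * gbQ m k) (m+1)]
    _ = ∑ k ∈ Finset.range (m+1), (-1:ℚ)^k * 2^((n-k)*(m+1-k)) * ddQ n k * gbQ m k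
        + ∑ k ∈ Finset.range (m+1), (-1:ℚ)^(k+1) * 2^((n-(k+1))*(m+1-(k+1))) * ddQ n (k+1) * (2^(m-k) * gbQ m k) := by
        rw [Finset.sum_range_succ]
        rw [gbQ_eq_zero (show m < m+1 by omega)]
        ring
    _ = ∑ k ∈ Finset.range (m+1),
          ((-1:ℚ)^k * 2^((n-k)*(m+1-k)) * ddQ n k * gbQ m k
           + (-1:ℚ)^(k+1) * 2^((n-(k+1))*(m+1-(k+1))) * ddQ n (k+1) * (2^(m-k) * gbQ m k)) := by
        rw [Finset.sum_add_distrib]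
    _ = Fsum n m := by
        rw [Fsum]
        apply Finset.sum_congr rfl
        intro k hkmem
        exact term_key (by have := Finset.mem_range.mp hkmem; omega)

lemma Fsum_eq_one (n m : ℕ) : Fsum n m = 1 := by
  induction m with
  | zero => exact Fsum_zero n
  | succ m ih => rw [Fsum_succ]; exact ih

end Fsum

section Counting
open Module Function

abbrev F2 := ZMod 2

-- Module.Finite from Finite
lemma modfin (M : Type*) [AddCommGroup M] [Module F2 M] [Finite M] : Module.Finite F2 M :=
  Module.finite_iff_finite.mpr ‹_›

variable {V : Type*} [AddCommGroup V] [Module F2 V] [Finite V]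

/-- Count of injective linear maps `F2^k → V`. -/
lemma card_inj {k v : ℕ} (hv : finrank F2 V = v) :
    Nat.card {f : (Fin k → F2) →ₗ[F2] V // Injective f} = nInj k v := by
  have : Module.Finite F2 V := modfin V
  rcases le_or_gt k v with hk | hk
  · -- equiv with linear independent families
    let e0 : (Fin k → V) ≃ₗ[F2] ((Fin k → F2) →ₗ[F2] V) := (Pi.basisFun F2 (Fin k)).constr F2
    have hiff : ∀ s : Fin k → V, LinearIndependent F2 s ↔ Injective (e0 s) := by
      intro s
      constructor
      · intro hs
        rw [← LinearMap.ker_eq_bot, eq_bot_iff]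
        intro x hx
        have hap : e0 s x = ∑ i, x i • s i := by
          rw [show e0 s = (Pi.basisFun F2 (Fin k)).constr F2 s from rfl,
            Basis.constr_apply_fintype, Pi.basisFun_equivFun]
          rfl
        have hx0 : ∑ i, x i • s i = 0 := by
          rw [← hap]; exact hx
        have := (Fintype.linearIndependent_iff.mp hs) x hx0
        simp only [Submodule.mem_bot]
        funext i
        exact this i
      · intro hinj
        have hcomp : s = (e0 s) ∘ (Pi.basisFun F2 (Fin k)) := by
          funext i
          rw [Function.comp_apply, show e0 s = (Pi.basisFun F2 (Fin k)).constr F2 s from rfl,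
            Basis.constr_basis]
        rw [hcomp]
        exact (Pi.basisFun F2 (Fin k)).linearIndependent.map' _ (LinearMap.ker_eq_bot.mpr hinj)
    have equiv1 : {s : Fin k → V // LinearIndependent F2 s} ≃
        {f : (Fin k → F2) →ₗ[F2] V // Injective f} :=
      (Equiv.subtypeEquiv e0.toEquiv (by intro s; exact hiff s))
    rw [← Nat.card_congr equiv1]
    rw [card_linearIndependent (by rw [hv]; exact hk)]
    rw [nInj, ← hv, show Fintype.card F2 = 2 from rfl]
    rw [Finset.prod_range fun j => 2^(finrank F2 V) - 2^j]
  · -- empty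
    have : IsEmpty {f : (Fin k → F2) →ₗ[F2] V // Injective f} := by
      constructor
      rintro ⟨f, hf⟩
      have := LinearMap.finrank_le_finrank_of_injective hf
      rw [hv, Module.finrank_fin_fun] at this
      omega
    rw [Nat.card_of_isEmpty]
    have : (2:ℕ)^v - 2^v = 0 := by omega
    rw [nInj, eq_comm]
    apply Finset.prod_eq_zero (Finset.mem_range.mpr hk)
    omega

end Counting

section Counting2
open Module Function

attribute [local instance] Fintype.ofFinite

variable {U W V : Type*} [AddCommGroup U] [Module F2 U] [Finite U]
  [AddCommGroup W] [Module F2 W] [Finite W] [AddCommGroup V] [Module F2 V] [Finite V]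

instance : Finite (Submodule F2 V) :=
  Finite.of_injective (fun (p : Submodule F2 V) => (p : Set V)) SetLike.coe_injective

instance : Finite (U ≃ₗ[F2] W) :=
  Finite.of_injective (fun (e : U ≃ₗ[F2] W) => (e : U → W)) DFunLike.coe_injective

instance : Finite (U →ₗ[F2] W) :=
  Finite.of_injective (fun (e : U →ₗ[F2] W) => (e : U → W)) DFunLike.coe_injective

lemma card_lequiv {r : ℕ} (hU : finrank F2 U = r) (hW : finrank F2 W = r) :
    Nat.card (U ≃ₗ[F2] W) = nInj r r := by
  have : Module.Finite F2 U := modfin U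
  have : Module.Finite F2 W := modfin W
  have e1 : (U ≃ₗ[F2] W) ≃ {f : U →ₗ[F2] W // Injective f} :=
    { toFun := fun g => ⟨g.toLinearMap, g.injective⟩
      invFun := fun f => LinearEquiv.ofBijective f.1
        ⟨f.2, (LinearMap.injective_iff_surjective_of_finrank_eq_finrank (hU.trans hW.symm)).mp f.2⟩
      left_inv := fun g => by ext x; rfl
      right_inv := fun f => by apply Subtype.ext; rfl }
  let eU : (Fin r → F2) ≃ₗ[F2] U := (((Module.finBasis F2 U).reindex (finCongr hU)).equivFun).symm
  have e2 : {f : U →ₗ[F2] W // Injective f} ≃ {f : (Fin r → F2) →ₗ[F2] W // Injective f} :=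
    { toFun := fun f => ⟨f.1 ∘ₗ eU.toLinearMap, f.2.comp eU.injective⟩
      invFun := fun f => ⟨f.1 ∘ₗ eU.symm.toLinearMap, f.2.comp eU.symm.injective⟩
      left_inv := fun f => by
        apply Subtype.ext; apply LinearMap.ext; intro x; simp
      right_inv := fun f => by
        apply Subtype.ext; apply LinearMap.ext; intro x; simp }
  rw [Nat.card_congr (e1.trans e2), card_inj hW]

lemma card_lequiv_zero (h : finrank F2 U ≠ finrank F2 W) : Nat.card (U ≃ₗ[F2] W) = 0 := by
  have : IsEmpty (U ≃ₗ[F2] W) := ⟨fun e => h e.finrank_eq⟩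
  exact Nat.card_of_isEmpty

lemma card_fiber_eq_ite {r : ℕ} (Wsub : Submodule F2 V) :
    Nat.card ((Fin r → F2) ≃ₗ[F2] Wsub) = if finrank F2 Wsub = r then nInj r r else 0 := by
  by_cases h : finrank F2 Wsub = r
  · rw [if_pos h, card_lequiv (Module.finrank_fin_fun F2) h]
  · rw [if_neg h, card_lequiv_zero]
    rw [Module.finrank_fin_fun]
    exact fun hc => h hc.symm

lemma card_sigma_count {α : Type*} [Finite α] (E : α → Type*) [∀ a, Finite (E a)] :
    Nat.card (Σ a, E a) = ∑ a : α, Nat.card (E a) := by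
  simp_rw [Nat.card_eq_fintype_card]
  exact Fintype.card_sigma

lemma card_grass_mul {v : ℕ} (r : ℕ) (hv : finrank F2 V = v) :
    Nat.card {Wsub : Submodule F2 V // finrank F2 Wsub = r} * nInj r r = nInj r v := by
  have : Module.Finite F2 V := modfin V
  classical
  let g : (Σ Wsub : Submodule F2 V, ((Fin r → F2) ≃ₗ[F2] Wsub)) →
      {f : (Fin r → F2) →ₗ[F2] V // Injective f} :=
    fun p => ⟨p.1.subtype ∘ₗ p.2.toLinearMap, p.1.injective_subtype.comp p.2.injective⟩
  have hrange : ∀ (W1 : Submodule F2 V) (e1 : (Fin r → F2) ≃ₗ[F2] W1),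
      LinearMap.range (W1.subtype ∘ₗ e1.toLinearMap) = W1 := by
    intro W1 e1
    rw [LinearMap.range_comp, LinearEquiv.range, Submodule.map_top, Submodule.range_subtype]
  have hg : Function.Bijective g := by
    constructor
    · rintro ⟨W1, e1⟩ ⟨W2, e2⟩ heq
      have heq' : W1.subtype ∘ₗ e1.toLinearMap = W2.subtype ∘ₗ e2.toLinearMap :=
        congrArg Subtype.val heq
      have hr : W1 = W2 := by rw [← hrange W1 e1, heq', hrange W2 e2]
      subst hr
      have he : e1 = e2 := by
        apply LinearEquiv.toLinearMap_injective
        apply LinearMap.ext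
        intro x
        apply W1.injective_subtype
        exact congrArg (fun (f : (Fin r → F2) →ₗ[F2] V) => f x) heq'
      rw [he]
    · rintro ⟨f, hf⟩
      refine ⟨⟨LinearMap.range f, LinearEquiv.ofInjective f hf⟩, ?_⟩
      apply Subtype.ext
      apply LinearMap.ext
      intro x
      rfl
  have hcard : Nat.card (Σ Wsub : Submodule F2 V, ((Fin r → F2) ≃ₗ[F2] Wsub))
      = nInj r v := by
    rw [Nat.card_congr (Equiv.ofBijective g hg), card_inj hv]
  rw [card_sigma_count] at hcard
  rw [← hcard]
  have : ∀ Wsub : Submodule F2 V, Nat.card ((Fin r → F2) ≃ₗ[F2] Wsub)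
      = if finrank F2 Wsub = r then nInj r r else 0 := card_fiber_eq_ite
  rw [Finset.sum_congr rfl (fun Wsub _ => this Wsub), ← Finset.sum_filter,
    Finset.sum_const, smul_eq_mul]
  congr 1
  rw [Nat.card_eq_fintype_card, Fintype.card_subtype]

end Counting2

section Counting3
open Module Function

attribute [local instance] Fintype.ofFinite

variable {U W : Type*} [AddCommGroup U] [Module F2 U] [Finite U]
  [AddCommGroup W] [Module F2 W] [Finite W]

lemma card_surj_mul {a b : ℕ} (hM : finrank F2 U = a) (hN : finrank F2 W = b) (hba : b ≤ a) :
    Nat.card {f : U →ₗ[F2] W // Surjective f} * nInj (a-b) (a-b) = nInj (a-b) a * nInj b b := by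
  have : Module.Finite F2 U := modfin U
  have : Module.Finite F2 W := modfin W
  classical
  let g : (Σ K : Submodule F2 U, ((U ⧸ K) ≃ₗ[F2] W)) → {f : U →ₗ[F2] W // Surjective f} :=
    fun p => ⟨p.2.toLinearMap ∘ₗ p.1.mkQ, p.2.surjective.comp (Submodule.mkQ_surjective p.1)⟩
  have hker : ∀ (K : Submodule F2 U) (e : (U ⧸ K) ≃ₗ[F2] W),
      LinearMap.ker (e.toLinearMap ∘ₗ K.mkQ) = K := by
    intro K e
    rw [LinearMap.ker_comp, LinearEquiv.ker, Submodule.comap_bot, Submodule.ker_mkQ]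
  have hg : Function.Bijective g := by
    constructor
    · rintro ⟨K1, e1⟩ ⟨K2, e2⟩ heq
      have heq' : e1.toLinearMap ∘ₗ K1.mkQ = e2.toLinearMap ∘ₗ K2.mkQ := congrArg Subtype.val heq
      have hk : K1 = K2 := by rw [← hker K1 e1, heq', hker K2 e2]
      subst hk
      have he : e1 = e2 := by
        apply LinearEquiv.toLinearMap_injective
        apply LinearMap.ext
        intro q
        obtain ⟨x, rfl⟩ := Submodule.mkQ_surjective K1 q
        exact congrArg (fun (f : U →ₗ[F2] W) => f x) heq'
      rw [he]
    · rintro ⟨f, hf⟩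
      have hinj : LinearMap.ker ((LinearMap.ker f).liftQ f le_rfl) = ⊥ :=
        Submodule.ker_liftQ_eq_bot _ _ le_rfl le_rfl
      have hsurj : Surjective ((LinearMap.ker f).liftQ f le_rfl) := by
        intro y
        obtain ⟨x, rfl⟩ := hf y
        exact ⟨Submodule.Quotient.mk x, rfl⟩
      refine ⟨⟨LinearMap.ker f,
        LinearEquiv.ofBijective ((LinearMap.ker f).liftQ f le_rfl)
          ⟨LinearMap.ker_eq_bot.mp hinj, hsurj⟩⟩, ?_⟩
      apply Subtype.ext
      apply LinearMap.ext
      intro x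
      rfl
  have hcard : Nat.card {f : U →ₗ[F2] W // Surjective f}
      = ∑ K : Submodule F2 U, Nat.card ((U ⧸ K) ≃ₗ[F2] W) := by
    rw [← Nat.card_congr (Equiv.ofBijective g hg), card_sigma_count]
  have hfib : ∀ K : Submodule F2 U, Nat.card ((U ⧸ K) ≃ₗ[F2] W)
      = if finrank F2 K = a - b then nInj b b else 0 := by
    intro K
    have hq : finrank F2 (U ⧸ K) + finrank F2 K = a := by
      rw [← hM]; exact Submodule.finrank_quotient_add_finrank K
    have hKle : finrank F2 K ≤ a := by omega
    by_cases h : finrank F2 K = a - b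
    · rw [if_pos h]
      exact card_lequiv (by omega) hN
    · rw [if_neg h]
      apply card_lequiv_zero
      rw [hN]
      omega
  rw [hcard, Finset.sum_congr rfl (fun K _ => hfib K), ← Finset.sum_filter,
    Finset.sum_const, smul_eq_mul]
  have : (Finset.filter (fun K : Submodule F2 U => finrank F2 K = a - b) Finset.univ).card
      = Nat.card {K : Submodule F2 U // finrank F2 K = a - b} := by
    rw [Nat.card_eq_fintype_card, Fintype.card_subtype]
  rw [this]
  have := card_grass_mul (V := U) (a-b) hM
  calc Nat.card {K : Submodule F2 U // finrank F2 K = a - b} * nInj b b * nInj (a-b) (a-b)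
      = (Nat.card {K : Submodule F2 U // finrank F2 K = a - b} * nInj (a-b) (a-b)) * nInj b b := by
        ring
    _ = nInj (a-b) a * nInj b b := by rw [this]

end Counting3

section Goursat
open Module Function

attribute [local instance] Fintype.ofFinite

variable {M N : Type*} [AddCommGroup M] [Module F2 M] [Finite M]
  [AddCommGroup N] [Module F2 N] [Finite N]

/-- the subspace `{(x,y) | φ x = [y]}` -/
noncomputable def VV (K : Submodule F2 N) (φ : M →ₗ[F2] N ⧸ K) : Submodule F2 (M × N) :=
  LinearMap.ker (φ ∘ₗ LinearMap.fst F2 M N - K.mkQ ∘ₗ LinearMap.snd F2 M N)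

lemma mem_VV {K : Submodule F2 N} {φ : M →ₗ[F2] N ⧸ K} (x : M) (y : N) :
    (x, y) ∈ VV K φ ↔ φ x = Submodule.Quotient.mk y := by
  simp [VV, LinearMap.mem_ker, sub_eq_zero]

lemma map_fst_VV (K : Submodule F2 N) (φ : M →ₗ[F2] N ⧸ K) :
    Submodule.map (LinearMap.fst F2 M N) (VV K φ) = ⊤ := by
  rw [eq_top_iff]
  rintro x -
  obtain ⟨y, hy⟩ := Submodule.mkQ_surjective K (φ x)
  exact Submodule.mem_map.mpr ⟨(x, y), (mem_VV x y).mpr (by rw [← hy]; rfl), rfl⟩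

lemma map_snd_VV {K : Submodule F2 N} {φ : M →ₗ[F2] N ⧸ K} (hφ : Surjective φ) :
    Submodule.map (LinearMap.snd F2 M N) (VV K φ) = ⊤ := by
  rw [eq_top_iff]
  rintro y -
  obtain ⟨x, hx⟩ := hφ (Submodule.Quotient.mk y)
  exact Submodule.mem_map.mpr ⟨(x, y), (mem_VV x y).mpr hx, rfl⟩

lemma mem_K_iff_VV (K : Submodule F2 N) (φ : M →ₗ[F2] N ⧸ K) (y : N) :
    y ∈ K ↔ ((0 : M), y) ∈ VV K φ := by
  rw [mem_VV, map_zero, eq_comm, Submodule.Quotient.mk_eq_zero]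

lemma surj_fst_VV (K : Submodule F2 N) (φ : M →ₗ[F2] N ⧸ K) :
    Surjective ((LinearMap.fst F2 M N) ∘ₗ (VV K φ).subtype) := by
  intro x
  obtain ⟨y, hy⟩ := Submodule.mkQ_surjective K (φ x)
  exact ⟨⟨(x, y), (mem_VV x y).mpr (by rw [← hy]; rfl)⟩, rfl⟩

lemma finrank_VV (K : Submodule F2 N) (φ : M →ₗ[F2] N ⧸ K) :
    finrank F2 (VV K φ) = finrank F2 M + finrank F2 K := by
  have : Module.Finite F2 M := modfin M
  have : Module.Finite F2 N := modfin N
  have : Module.Finite F2 (VV K φ) := modfin _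
  set p := (LinearMap.fst F2 M N) ∘ₗ (VV K φ).subtype with hp_def
  have hp : Surjective p := surj_fst_VV K φ
  -- ker p ≃ K
  let l0 : LinearMap.ker p →ₗ[F2] N :=
    (LinearMap.snd F2 M N) ∘ₗ (VV K φ).subtype ∘ₗ (LinearMap.ker p).subtype
  have hl0 : ∀ v, l0 v ∈ K := by
    rintro ⟨⟨⟨x, y⟩, hmem⟩, hker⟩
    have hx : x = 0 := hker
    subst hx
    exact (mem_K_iff_VV K φ y).mpr hmem
  let l := LinearMap.codRestrict K l0 hl0
  have hbij : Bijective l := by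
    constructor
    · intro v w hvw
      obtain ⟨⟨⟨x1, y1⟩, hm1⟩, hk1⟩ := v
      obtain ⟨⟨⟨x2, y2⟩, hm2⟩, hk2⟩ := w
      have hy : y1 = y2 := congrArg Subtype.val hvw
      have hx1 : x1 = 0 := hk1
      have hx2 : x2 = 0 := hk2
      subst hy hx1 hx2
      rfl
    · intro k
      refine ⟨⟨⟨((0 : M), (k : N)), (mem_K_iff_VV K φ k).mp k.2⟩, ?_⟩, ?_⟩
      · show p _ = 0
        rfl
      · apply Subtype.ext
        rfl
  have hrk : finrank F2 (LinearMap.ker p) = finrank F2 K :=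
    (LinearEquiv.ofBijective l hbij).finrank_eq
  have hrn := LinearMap.finrank_range_add_finrank_ker p
  rw [LinearMap.range_eq_top.mpr hp, finrank_top, hrk] at hrn
  omega

end Goursat

section MasterCount
open Module Function

attribute [local instance] Fintype.ofFinite

variable {M N : Type*} [AddCommGroup M] [Module F2 M] [Finite M]
  [AddCommGroup N] [Module F2 N] [Finite N]

lemma nInj_self_pos (r : ℕ) : 0 < nInj r r := by
  apply Finset.prod_pos
  intro j hj
  have hj' : j < r := Finset.mem_range.mp hj
  have : (2:ℕ)^j < 2^r := Nat.pow_lt_pow_right (by norm_num) hj'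
  omega

lemma nInj_cast_eq {r v : ℕ} (h : r ≤ v) :
    (nInj r v : ℚ) * (Phi (v - r) : ℚ) = 2^(Tn r) * (Phi v : ℚ) := by
  exact_mod_cast congrArg (fun x : ℕ => (x : ℚ)) (nInj_mul_Phi h)

lemma ddQ_eq_div {n k : ℕ} (h : k ≤ n) : ddQ n k = (Phi n : ℚ) / (Phi (n-k) : ℚ) := by
  rw [eq_div_iff (PhiQ_ne _), ddQ_mul_Phi h]

/-- The master counting lemma for subspaces of `M × N` with full projections. -/
lemma card_G {a b d : ℕ} (hM : finrank F2 M = a) (hN : finrank F2 N = b)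
    (had : a ≤ d) (hbd : b ≤ d) (hdab : d ≤ a + b) :
    (Nat.card {V : Submodule F2 (M × N) // finrank F2 V = d ∧
       Submodule.map (LinearMap.fst F2 M N) V = ⊤ ∧
       Submodule.map (LinearMap.snd F2 M N) V = ⊤} : ℚ)
    = 2^(Tn (a+b-d)) * ddQ a (a+b-d) * ddQ b (a+b-d) / (Phi (a+b-d) : ℚ) := by
  have : Module.Finite F2 M := modfin M
  have : Module.Finite F2 N := modfin N
  classical
  set k := a + b - d with hk_def
  let g : (Σ K : {K : Submodule F2 N // finrank F2 K = d - a},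
      {φ : M →ₗ[F2] N ⧸ (K : Submodule F2 N) // Surjective φ}) →
      {V : Submodule F2 (M × N) // finrank F2 V = d ∧
        Submodule.map (LinearMap.fst F2 M N) V = ⊤ ∧
        Submodule.map (LinearMap.snd F2 M N) V = ⊤} :=
    fun p => ⟨VV (p.1 : Submodule F2 N) p.2.1,
      by rw [finrank_VV, hM, p.1.2]; omega,
      map_fst_VV _ _, map_snd_VV p.2.2⟩
  have hg : Bijective g := by
    constructor
    · rintro ⟨⟨K1, hK1⟩, ⟨φ1, hφ1⟩⟩ ⟨⟨K2, hK2⟩, ⟨φ2, hφ2⟩⟩ heq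
      have hVeq : VV K1 φ1 = VV K2 φ2 := congrArg Subtype.val heq
      have hKeq : K1 = K2 := by
        ext y
        rw [mem_K_iff_VV K1 φ1 y, mem_K_iff_VV K2 φ2 y, hVeq]
      subst hKeq
      have hφeq : φ1 = φ2 := by
        apply LinearMap.ext
        intro x
        obtain ⟨y, hy⟩ := Submodule.mkQ_surjective K1 (φ1 x)
        have h1 : (x, y) ∈ VV K1 φ1 := (mem_VV x y).mpr (by rw [← hy]; rfl)
        have h2 : (x, y) ∈ VV K1 φ2 := by rw [← hVeq]; exact h1
        rw [(mem_VV x y).mp h1, (mem_VV x y).mp h2]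
      subst hφeq
      rfl
    · rintro ⟨V, hd, hf, hs⟩
      set K : Submodule F2 N := Submodule.comap (LinearMap.inr F2 M N) V with hK_def
      have memK : ∀ y : N, y ∈ K ↔ ((0 : M), y) ∈ V := fun y => Iff.rfl
      set p := (LinearMap.fst F2 M N) ∘ₗ V.subtype with hp_def
      have hp : Surjective p := by
        intro x
        have hx : x ∈ Submodule.map (LinearMap.fst F2 M N) V := by rw [hf]; trivial
        obtain ⟨v, hv, hvx⟩ := Submodule.mem_map.mp hx
        exact ⟨⟨v, hv⟩, hvx⟩
      obtain ⟨h, hh⟩ := p.exists_rightInverse_of_surjective (LinearMap.range_eq_top.mpr hp)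
      have hh' : ∀ x : M, ((h x : M × N)).1 = x := fun x =>
        congrArg (fun (f : M →ₗ[F2] M) => f x) hh
      set φ : M →ₗ[F2] N ⧸ K := (K.mkQ ∘ₗ ((LinearMap.snd F2 M N) ∘ₗ V.subtype)) ∘ₗ h with hφ_def
      have hφap : ∀ x : M, φ x = Submodule.Quotient.mk ((h x : M × N)).2 := fun x => rfl
      have key : ∀ v : V, φ ((v : M × N).1) = Submodule.Quotient.mk ((v : M × N).2) := by
        intro v
        set x := (v : M × N).1 with hx_def
        have hpv : ((h x : M × N)).1 = x := hh' x
        have hmem : (v : M × N) - (h x : M × N) ∈ V := V.sub_mem v.2 (h x).2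
        have h0 : ((0 : M), ((v : M × N) - (h x : M × N)).2) ∈ V := by
          have heq2 : ((0 : M), ((v : M × N) - (h x : M × N)).2)
              = (v : M × N) - (h x : M × N) := by
            rw [Prod.ext_iff]
            refine ⟨?_, rfl⟩
            show (0 : M) = ((v : M × N) - (h x : M × N)).1
            have : ((v : M × N) - (h x : M × N)).1 = (v : M × N).1 - ((h x : M × N)).1 := rfl
            rw [this, hpv]
            exact (sub_self _).symm
          rw [heq2]
          exact hmem
        have hKmem : ((v : M × N) - (h x : M × N)).2 ∈ K := (memK _).mpr h0
        have hq : Submodule.Quotient.mk (p := K) ((v : M × N).2)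
            = Submodule.Quotient.mk ((h x : M × N).2) := by
          rw [Submodule.Quotient.eq]
          exact hKmem
        rw [hφap x, ← hq]
      have hφs : Surjective φ := by
        intro z
        obtain ⟨y, rfl⟩ := Submodule.mkQ_surjective K z
        have hy : y ∈ Submodule.map (LinearMap.snd F2 M N) V := by rw [hs]; trivial
        obtain ⟨v, hv, hvy⟩ := Submodule.mem_map.mp hy
        refine ⟨(v : M × N).1, ?_⟩
        have := key ⟨v, hv⟩
        simp only [Submodule.mkQ_apply]
        rw [this]
        exact congrArg _ hvy
      have hVV : VV K φ = V := by
        ext q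
        obtain ⟨x, y⟩ := q
        rw [mem_VV]
        constructor
        · intro hxy
          have h1 : ((h x : M × N)).1 = x := hh' x
          have h2 : φ x = Submodule.Quotient.mk ((h x : M × N).2) := hφap x
          have h3 : Submodule.Quotient.mk (p := K) y
              = Submodule.Quotient.mk ((h x : M × N).2) := by rw [← hxy, h2]
          have h4 : y - (h x : M × N).2 ∈ K := (Submodule.Quotient.eq K).mp h3
          have h5 : ((0 : M), y - (h x : M × N).2) ∈ V := (memK _).mp h4
          have h6 : (x, y) = ((h x : M × N)) + ((0 : M), y - (h x : M × N).2) := by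
            rw [Prod.ext_iff]
            constructor
            · show x = ((h x : M × N)).1 + 0
              rw [h1, add_zero]
            · show y = ((h x : M × N)).2 + (y - (h x : M × N).2)
              abel
          rw [h6]
          exact V.add_mem (h x).2 h5
        · intro hxy
          exact key ⟨(x, y), hxy⟩
      have hKrank : finrank F2 K = d - a := by
        have hfr := finrank_VV K φ
        rw [hVV, hd, hM] at hfr
        omega
      exact ⟨⟨⟨K, hKrank⟩, ⟨φ, hφs⟩⟩, Subtype.ext hVV⟩
  rw [← Nat.card_congr (Equiv.ofBijective g hg), card_sigma_count, Nat.cast_sum]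
  have hfib : ∀ K : {K : Submodule F2 N // finrank F2 K = d - a},
      (Nat.card {φ : M →ₗ[F2] N ⧸ (K : Submodule F2 N) // Surjective φ} : ℚ)
      = (nInj (d-b) a : ℚ) * (nInj k k : ℚ) / (nInj (d-b) (d-b) : ℚ) := by
    intro K
    have hqr : finrank F2 (N ⧸ (K : Submodule F2 N)) = k := by
      have h1 := Submodule.finrank_quotient_add_finrank (K : Submodule F2 N)
      rw [hN, K.2] at h1
      omega
    have hmul := card_surj_mul (U := M) (W := N ⧸ (K : Submodule F2 N)) hM hqr
      (by omega : k ≤ a)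
    have hak : a - k = d - b := by omega
    rw [hak] at hmul
    have hne : ((nInj (d-b) (d-b) : ℚ)) ≠ 0 := by
      exact_mod_cast (nInj_self_pos (d-b)).ne'
    rw [eq_div_iff hne]
    exact_mod_cast hmul
  rw [Finset.sum_congr rfl (fun K _ => hfib K), Finset.sum_const, nsmul_eq_mul]
  rw [@Finset.card_univ _ (Fintype.ofFinite _), @Fintype.card_eq_nat_card _ (Fintype.ofFinite _)]
  have hgr := card_grass_mul (V := N) (d - a) hN
  have hgrQ : (Nat.card {K : Submodule F2 N // finrank F2 K = d - a} : ℚ)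
      = (nInj (d-a) b : ℚ) / (nInj (d-a) (d-a) : ℚ) := by
    have hne : ((nInj (d-a) (d-a) : ℚ)) ≠ 0 := by
      exact_mod_cast (nInj_self_pos (d-a)).ne'
    rw [eq_div_iff hne]
    exact_mod_cast hgr
  rw [hgrQ]
  have A1 : (nInj (d-b) a : ℚ) = 2^(Tn (d-b)) * (Phi a : ℚ) / (Phi k : ℚ) := by
    rw [eq_div_iff (PhiQ_ne k)]
    have := nInj_cast_eq (show d - b ≤ a by omega)
    rw [show a - (d-b) = k by omega] at this
    exact this
  have A2 : (nInj k k : ℚ) = 2^(Tn k) * (Phi k : ℚ) := by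
    have := nInj_cast_eq (le_refl k)
    rw [Nat.sub_self, Phi_zero] at this
    simpa using this
  have A3 : (nInj (d-b) (d-b) : ℚ) = 2^(Tn (d-b)) * (Phi (d-b) : ℚ) := by
    have := nInj_cast_eq (le_refl (d-b))
    rw [Nat.sub_self, Phi_zero] at this
    simpa using this
  have A4 : (nInj (d-a) b : ℚ) = 2^(Tn (d-a)) * (Phi b : ℚ) / (Phi k : ℚ) := by
    rw [eq_div_iff (PhiQ_ne k)]
    have := nInj_cast_eq (show d - a ≤ b by omega)
    rw [show b - (d-a) = k by omega] at this
    exact this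
  have A5 : (nInj (d-a) (d-a) : ℚ) = 2^(Tn (d-a)) * (Phi (d-a) : ℚ) := by
    have := nInj_cast_eq (le_refl (d-a))
    rw [Nat.sub_self, Phi_zero] at this
    simpa using this
  have hd1 : ddQ a k = (Phi a : ℚ) / (Phi (d-b) : ℚ) := by
    rw [ddQ_eq_div (show k ≤ a by omega), show a - k = d - b by omega]
  have hd2 : ddQ b k = (Phi b : ℚ) / (Phi (d-a) : ℚ) := by
    rw [ddQ_eq_div (show k ≤ b by omega), show b - k = d - a by omega]
  rw [A1, A2, A3, A4, A5, hd1, hd2]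
  have h2ne : ∀ s : ℕ, ((2:ℚ)^s) ≠ 0 := fun s => pow_ne_zero s (by norm_num)
  field_simp [PhiQ_ne]
end MasterCount

section Transport
open Module Function

variable {A B : Type*} [AddCommGroup A] [Module F2 A] [Finite A]
  [AddCommGroup B] [Module F2 B] [Finite B]

lemma card_transport (V1 : Submodule F2 A) (V2 : Submodule F2 B) (d : ℕ) :
    Nat.card {V : Submodule F2 (A × B) // finrank F2 V = d ∧
      Submodule.map (LinearMap.fst F2 A B) V = V1 ∧
      Submodule.map (LinearMap.snd F2 A B) V = V2}
    = Nat.card {V : Submodule F2 (V1 × V2) // finrank F2 V = d ∧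
      Submodule.map (LinearMap.fst F2 V1 V2) V = ⊤ ∧
      Submodule.map (LinearMap.snd F2 V1 V2) V = ⊤} := by
  set ι : (V1 × V2) →ₗ[F2] (A × B) := (V1.subtype).prodMap (V2.subtype) with hι_def
  have hι_ap : ∀ p : V1 × V2, ι p = ((p.1 : A), (p.2 : B)) := fun p => rfl
  have hι : Injective ι := by
    intro p q hpq
    have h1 : (p.1 : A) = (q.1 : A) := congrArg Prod.fst hpq
    have h2 : (p.2 : B) = (q.2 : B) := congrArg Prod.snd hpq
    exact Prod.ext (Subtype.ext h1) (Subtype.ext h2)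
  have hcomp1 : (LinearMap.fst F2 A B) ∘ₗ ι = V1.subtype ∘ₗ (LinearMap.fst F2 V1 V2) :=
    LinearMap.ext fun p => rfl
  have hcomp2 : (LinearMap.snd F2 A B) ∘ₗ ι = V2.subtype ∘ₗ (LinearMap.snd F2 V1 V2) :=
    LinearMap.ext fun p => rfl
  symm
  apply Nat.card_congr
  refine
    { toFun := fun V' => ⟨Submodule.map ι V'.1, ?_, ?_, ?_⟩
      invFun := fun V => ⟨Submodule.comap ι V.1, ?_, ?_, ?_⟩
      left_inv := ?_
      right_inv := ?_ }
  · rw [← (Submodule.equivMapOfInjective ι hι V'.1).finrank_eq]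
    exact V'.2.1
  · rw [← Submodule.map_comp, hcomp1, Submodule.map_comp, V'.2.2.1, Submodule.map_top,
      Submodule.range_subtype]
  · rw [← Submodule.map_comp, hcomp2, Submodule.map_comp, V'.2.2.2, Submodule.map_top,
      Submodule.range_subtype]
  · -- finrank of comap
    obtain ⟨V, hd, hf, hs⟩ := V
    have hle : V ≤ LinearMap.range ι := by
      intro v hv
      have h1 : v.1 ∈ V1 := by
        rw [← hf]; exact Submodule.mem_map.mpr ⟨v, hv, rfl⟩
      have h2 : v.2 ∈ V2 := by
        rw [← hs]; exact Submodule.mem_map.mpr ⟨v, hv, rfl⟩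
      exact ⟨(⟨v.1, h1⟩, ⟨v.2, h2⟩), rfl⟩
    have hmc : Submodule.map ι (Submodule.comap ι V) = V := by
      rw [Submodule.map_comap_eq, inf_eq_right.mpr hle]
    show finrank F2 (Submodule.comap ι V) = d
    have heq := (Submodule.equivMapOfInjective ι hι (Submodule.comap ι V)).finrank_eq
    rw [hmc] at heq
    rw [heq, hd]
  · -- fst of comap is top
    obtain ⟨V, hd, hf, hs⟩ := V
    rw [eq_top_iff]
    rintro x -
    have hx : (x : A) ∈ Submodule.map (LinearMap.fst F2 A B) V := by rw [hf]; exact x.2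
    obtain ⟨v, hv, hvx⟩ := Submodule.mem_map.mp hx
    have h2 : v.2 ∈ V2 := by
      rw [← hs]; exact Submodule.mem_map.mpr ⟨v, hv, rfl⟩
    refine Submodule.mem_map.mpr ⟨(x, ⟨v.2, h2⟩), ?_, rfl⟩
    show ι (x, ⟨v.2, h2⟩) ∈ V
    rw [hι_ap]
    have : ((x : A), v.2) = v := Prod.ext hvx.symm rfl
    rw [this]
    exact hv
  · -- snd of comap is top
    obtain ⟨V, hd, hf, hs⟩ := V
    rw [eq_top_iff]
    rintro y -
    have hy : (y : B) ∈ Submodule.map (LinearMap.snd F2 A B) V := by rw [hs]; exact y.2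
    obtain ⟨v, hv, hvy⟩ := Submodule.mem_map.mp hy
    have h1 : v.1 ∈ V1 := by
      rw [← hf]; exact Submodule.mem_map.mpr ⟨v, hv, rfl⟩
    refine Submodule.mem_map.mpr ⟨(⟨v.1, h1⟩, y), ?_, rfl⟩
    show ι (⟨v.1, h1⟩, y) ∈ V
    rw [hι_ap]
    have : (v.1, (y : B)) = v := Prod.ext rfl hvy.symm
    rw [this]
    exact hv
  · -- left_inv
    rintro ⟨V', h⟩
    apply Subtype.ext
    exact Submodule.comap_map_eq_of_injective hι V'
  · -- right_inv
    rintro ⟨V, hd, hf, hs⟩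
    apply Subtype.ext
    show Submodule.map ι (Submodule.comap ι V) = V
    have hle : V ≤ LinearMap.range ι := by
      intro v hv
      have h1 : v.1 ∈ V1 := by
        rw [← hf]; exact Submodule.mem_map.mpr ⟨v, hv, rfl⟩
      have h2 : v.2 ∈ V2 := by
        rw [← hs]; exact Submodule.mem_map.mpr ⟨v, hv, rfl⟩
      exact ⟨(⟨v.1, h1⟩, ⟨v.2, h2⟩), rfl⟩
    rw [Submodule.map_comap_eq, inf_eq_right.mpr hle]

end Transport

section Final
open Module Function

lemma prodQ_eq {a k : ℕ} (hka : k ≤ a) :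
    (∏ j ∈ Finset.range k, ((2:ℚ)^a - 2^j)) = 2^(Tn k) * ddQ a k := by
  calc (∏ j ∈ Finset.range k, ((2:ℚ)^a - 2^j))
      = ∏ j ∈ Finset.range k, ((2:ℚ)^j * ((2:ℚ)^(a-j) - 1)) := by
        apply Finset.prod_congr rfl
        intro j hj
        have hj' : j < k := Finset.mem_range.mp hj
        have h2 : (2:ℚ)^(a-j) * 2^j = 2^a := pow_sub_q (by omega)
        rw [mul_sub, mul_one, mul_comm ((2:ℚ)^j) ((2:ℚ)^(a-j)), h2]
    _ = (∏ j ∈ Finset.range k, (2:ℚ)^j) * ∏ j ∈ Finset.range k, ((2:ℚ)^(a-j) - 1) :=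
        Finset.prod_mul_distrib
    _ = 2^(Tn k) * ddQ a k := by
        rw [Finset.prod_pow_eq_pow_sum, Tn, ddQ]

lemma prod_form {a b k : ℕ} (hka : k ≤ a) (hkb : k ≤ b) :
    (∏ j ∈ Finset.range k, (((2:ℚ)^a - 2^j) * ((2:ℚ)^b - 2^j) / ((2:ℚ)^k - 2^j)))
    = 2^(Tn k) * ddQ a k * ddQ b k / (Phi k : ℚ) := by
  rw [Finset.prod_div_distrib, Finset.prod_mul_distrib, prodQ_eq hka, prodQ_eq hkb,
    prodQ_eq (le_refl k), ddQ_self]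
  have h2ne : ((2:ℚ)^(Tn k)) ≠ 0 := pow_ne_zero _ two_ne_zero
  field_simp [PhiQ_ne]

end Final

/-- `N_{d₁,d₂;d}`: the number of subspaces `V ⊆ 𝔽₂^{d₁} ⊕ 𝔽₂^{d₂}` of dimension `d`
projecting onto each full factor. -/
noncomputable def Ncount (d1 d2 d : ℕ) : ℕ :=
  Nat.card {V : Submodule (ZMod 2) ((Fin d1 → ZMod 2) × (Fin d2 → ZMod 2)) //
    Module.finrank (ZMod 2) V = d ∧
    Submodule.map (LinearMap.fst (ZMod 2) (Fin d1 → ZMod 2) (Fin d2 → ZMod 2)) V = ⊤ ∧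
    Submodule.map (LinearMap.snd (ZMod 2) (Fin d1 → ZMod 2) (Fin d2 → ZMod 2)) V = ⊤}

section Final2
open Module Function

lemma Ncount_eq {n m i : ℕ} (h : i ≤ n + m) :
    (Ncount n m i : ℚ)
    = 2^(Tn (n+m-i)) * ddQ n (n+m-i) * ddQ m (n+m-i) / (Phi (n+m-i) : ℚ) := by
  by_cases hn : n ≤ i
  · by_cases hm : m ≤ i
    · exact card_G (Module.finrank_fin_fun F2) (Module.finrank_fin_fun F2) hn hm h
    · -- i < m : empty
      have hempty : IsEmpty {V : Submodule (ZMod 2) ((Fin n → ZMod 2) × (Fin m → ZMod 2)) //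
          Module.finrank (ZMod 2) V = i ∧
          Submodule.map (LinearMap.fst (ZMod 2) (Fin n → ZMod 2) (Fin m → ZMod 2)) V = ⊤ ∧
          Submodule.map (LinearMap.snd (ZMod 2) (Fin n → ZMod 2) (Fin m → ZMod 2)) V = ⊤} := by
        constructor
        rintro ⟨V, hd, hf, hs⟩
        have : Module.Finite F2 V := modfin V
        have hle := Submodule.finrank_map_le (LinearMap.snd F2 (Fin n → F2) (Fin m → F2)) V
        rw [hs, finrank_top, Module.finrank_fin_fun, hd] at hle
        omega
      rw [Ncount, Nat.card_of_isEmpty, ddQ_eq_zero (show n < n + m - i by omega)]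
      simp
  · -- i < n : empty
    have hempty : IsEmpty {V : Submodule (ZMod 2) ((Fin n → ZMod 2) × (Fin m → ZMod 2)) //
        Module.finrank (ZMod 2) V = i ∧
        Submodule.map (LinearMap.fst (ZMod 2) (Fin n → ZMod 2) (Fin m → ZMod 2)) V = ⊤ ∧
        Submodule.map (LinearMap.snd (ZMod 2) (Fin n → ZMod 2) (Fin m → ZMod 2)) V = ⊤} := by
      constructor
      rintro ⟨V, hd, hf, hs⟩
      have : Module.Finite F2 V := modfin V
      have hle := Submodule.finrank_map_le (LinearMap.fst F2 (Fin n → F2) (Fin m → F2)) V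
      rw [hf, finrank_top, Module.finrank_fin_fun, hd] at hle
      omega
    rw [Ncount, Nat.card_of_isEmpty, ddQ_eq_zero (show m < n + m - i by omega)]
    simp

end Final2

/-- The count of `d`-dimensional subspaces of `𝔽₂^m ⊕ 𝔽₂^n` with prescribed projections
`V₁, V₂` of dimensions `d₁, d₂` is `∏_{j<d₁+d₂-d} (2^{d₁}-2^j)(2^{d₂}-2^j)/(2^{d₁+d₂-d}-2^j)`,
and these counts satisfy Grushevsky's alternating identity. -/
theorem stmt19 :
    (∀ (m n d1 d2 d : ℕ), d1 ≤ d → d2 ≤ d → d ≤ d1 + d2 →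
      ∀ (V1 : Submodule (ZMod 2) (Fin m → ZMod 2)) (V2 : Submodule (ZMod 2) (Fin n → ZMod 2)),
        Module.finrank (ZMod 2) V1 = d1 → Module.finrank (ZMod 2) V2 = d2 →
        (Nat.card {V : Submodule (ZMod 2) ((Fin m → ZMod 2) × (Fin n → ZMod 2)) //
            Module.finrank (ZMod 2) V = d ∧
            Submodule.map (LinearMap.fst (ZMod 2) (Fin m → ZMod 2) (Fin n → ZMod 2)) V = V1 ∧
            Submodule.map (LinearMap.snd (ZMod 2) (Fin m → ZMod 2) (Fin n → ZMod 2)) V = V2} : ℚ)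
          = ∏ j ∈ Finset.range (d1 + d2 - d),
              ((2 : ℚ) ^ d1 - 2 ^ j) * ((2 : ℚ) ^ d2 - 2 ^ j) / ((2 : ℚ) ^ (d1 + d2 - d) - 2 ^ j)) ∧
    (∀ n m : ℕ,
      (-1 : ℚ) ^ n * 2 ^ (n * (n - 1) / 2) * ((-1 : ℚ) ^ m * 2 ^ (m * (m - 1) / 2))
        = ∑ i ∈ Finset.range (n + m + 1),
            (-1 : ℚ) ^ i * 2 ^ (i * (i - 1) / 2) * (Ncount n m i : ℚ)) := by
  constructor
  · intro m n d1 d2 d h1 h2 h3 V1 V2 hV1 hV2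
    rw [card_transport V1 V2 d, prod_form (show d1 + d2 - d ≤ d1 by omega)
      (show d1 + d2 - d ≤ d2 by omega)]
    exact card_G hV1 hV2 h1 h2 h3
  · intro n m
    have hterm : ∀ i ∈ Finset.range (n+m+1),
        (-1:ℚ)^i * 2^(Tn i) *
          (2^(Tn (n+m-i)) * ddQ n (n+m-i) * ddQ m (n+m-i) / (Phi (n+m-i) : ℚ))
        = (-1:ℚ)^i * 2^(i*(i-1)/2) * (Ncount n m i : ℚ) := by
      intro i hi
      have hi' : i ≤ n + m := by have := Finset.mem_range.mp hi; omega
      rw [Ncount_eq hi', Tn_eq]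
    have hterm2 : ∀ k ∈ Finset.range (n+m+1),
        ((-1:ℚ)^(n+m) * 2^(Tn n) * 2^(Tn m)) *
          ((-1:ℚ)^k * 2^((n-k)*(m-k)) * ddQ n k * gbQ m k)
        = (-1:ℚ)^(n+m+1-1-k) * 2^(Tn (n+m+1-1-k)) *
          (2^(Tn (n+m-(n+m+1-1-k))) * ddQ n (n+m-(n+m+1-1-k)) * ddQ m (n+m-(n+m+1-1-k))
            / (Phi (n+m-(n+m+1-1-k)) : ℚ)) := by
      intro k hk
      have hk' : k ≤ n + m := by have := Finset.mem_range.mp hk; omega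
      have hidx : n+m+1-1-k = n+m-k := by omega
      rw [hidx]
      rw [show n+m-(n+m-k) = k from by omega]
      have hsign : (-1:ℚ)^(n+m-k) = (-1:ℚ)^(n+m) * (-1:ℚ)^k := by
        have h1 : (-1:ℚ)^(n+m-k) * (-1:ℚ)^k = (-1:ℚ)^(n+m) := by
          rw [← pow_add]; congr 1; omega
        have h2 : ((-1:ℚ)^k) * ((-1:ℚ)^k) = 1 := by
          rw [← pow_add]
          exact Even.neg_one_pow ⟨k, rfl⟩
        calc (-1:ℚ)^(n+m-k) = (-1:ℚ)^(n+m-k) * (((-1:ℚ)^k) * ((-1:ℚ)^k)) := by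
              rw [h2, mul_one]
          _ = ((-1:ℚ)^(n+m-k) * (-1:ℚ)^k) * (-1:ℚ)^k := by ring
          _ = (-1:ℚ)^(n+m) * (-1:ℚ)^k := by rw [h1]
      rw [hsign, gbQ]
      by_cases hkn : k ≤ n ∧ k ≤ m
      · have hpow : (2:ℚ)^(Tn (n+m-k)) * 2^(Tn k) = 2^(Tn n) * 2^(Tn m) * 2^((n-k)*(m-k)) := by
          rw [← pow_add, ← pow_add, ← pow_add]
          congr 1
          have := Tn_key hkn.1 hkn.2
          omega
        have hY := PhiQ_ne k
        field_simp
        linear_combination (-(ddQ n k * ddQ m k)) * hpow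
      · rcases not_and_or.mp hkn with h | h
        · rw [ddQ_eq_zero (show n < k by omega)]
          ring
        · rw [ddQ_eq_zero (show m < k by omega)]
          ring
    have hFs : (∑ k ∈ Finset.range (m+1),
        (-1:ℚ)^k * 2^((n-k)*(m-k)) * ddQ n k * gbQ m k) = 1 := Fsum_eq_one n m
    have hshrink : ∑ k ∈ Finset.range (n+m+1),
        ((-1:ℚ)^k * 2^((n-k)*(m-k)) * ddQ n k * gbQ m k)
        = ∑ k ∈ Finset.range (m+1), ((-1:ℚ)^k * 2^((n-k)*(m-k)) * ddQ n k * gbQ m k) := by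
      symm
      apply Finset.sum_subset
      · exact Finset.range_subset_range.mpr (by omega)
      · intro k hk1 hk2
        rw [gbQ_eq_zero (show m < k by
          have := Finset.mem_range.not.mp hk2; omega), mul_zero]
    calc (-1:ℚ)^n * 2^(n*(n-1)/2) * ((-1:ℚ)^m * 2^(m*(m-1)/2))
        = (-1:ℚ)^(n+m) * 2^(Tn n) * 2^(Tn m) := by
          rw [← Tn_eq, ← Tn_eq, pow_add]
          ring
      _ = ((-1:ℚ)^(n+m) * 2^(Tn n) * 2^(Tn m)) *
          (∑ k ∈ Finset.range (m+1), ((-1:ℚ)^k * 2^((n-k)*(m-k)) * ddQ n k * gbQ m k)) := by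
          rw [hFs, mul_one]
      _ = ((-1:ℚ)^(n+m) * 2^(Tn n) * 2^(Tn m)) *
          (∑ k ∈ Finset.range (n+m+1), ((-1:ℚ)^k * 2^((n-k)*(m-k)) * ddQ n k * gbQ m k)) := by
          rw [hshrink]
      _ = ∑ k ∈ Finset.range (n+m+1), ((-1:ℚ)^(n+m) * 2^(Tn n) * 2^(Tn m)) *
          ((-1:ℚ)^k * 2^((n-k)*(m-k)) * ddQ n k * gbQ m k) := Finset.mul_sum _ _ _
      _ = ∑ k ∈ Finset.range (n+m+1),
          (-1:ℚ)^(n+m+1-1-k) * 2^(Tn (n+m+1-1-k)) *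
          (2^(Tn (n+m-(n+m+1-1-k))) * ddQ n (n+m-(n+m+1-1-k)) * ddQ m (n+m-(n+m+1-1-k))
            / (Phi (n+m-(n+m+1-1-k)) : ℚ)) := Finset.sum_congr rfl hterm2
      _ = ∑ i ∈ Finset.range (n+m+1),
          (-1:ℚ)^i * 2^(Tn i) *
          (2^(Tn (n+m-i)) * ddQ n (n+m-i) * ddQ m (n+m-i) / (Phi (n+m-i) : ℚ)) :=
          Finset.sum_range_reflect
            (fun i => (-1:ℚ)^i * 2^(Tn i) *
              (2^(Tn (n+m-i)) * ddQ n (n+m-i) * ddQ m (n+m-i) / (Phi (n+m-i) : ℚ))) (n+m+1)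
      _ = ∑ i ∈ Finset.range (n+m+1),
          (-1:ℚ)^i * 2^(i*(i-1)/2) * (Ncount n m i : ℚ) := Finset.sum_congr rfl hterm
end
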